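/- arXiv:1112.0104 — 2 statements merged into one kernel-verified Lean document; each statement's English description precedes it below -/
import Mathlib

section
/- Suppose ℙ satisfies the 'usual conditions'. For u ∈ L²_cov, u is orthogonal to L²_∇ if and only if div(ωu)(ω) := Σ_{x∈N} ω_{0,x}[u(ω,x) − u(τ_xω,−x)] = 0 for ℙ-almost every ω. In particular, if N generates ℤ^d and U: Ω×ℤ^d → ℝ^d is the unique extension of u to ℤ^d (U(ω,0) = 0 and U(ω,x+z) − U(ω,x) = u(τ_xω,z) for all x∈ℤ^d, z∈N), then L_ωU(ω,x) := Σ_y ω_{xy}[U(ω,y) − U(ω,x)] = 0 for all x∈ℤ^d and ℙ-almost every ω. -/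
open MeasureTheory Filter Topology Set
open scoped ENNReal NNReal

noncomputable section

namespace RCM

/-- Vertices of the lattice `ℤ^d`. -/
abbrev V (d : ℕ) := Fin d → ℤ

/-- Euclidean norm of a vector in `ℝ^d`. -/
def rnorm {d : ℕ} (y : Fin d → ℝ) : ℝ := Real.sqrt (∑ i, (y i) ^ 2)

/-- The canonical embedding `ℤ^d → ℝ^d`. -/
def toR {d : ℕ} (x : V d) : Fin d → ℝ := fun i => (x i : ℝ)

/-- Euclidean norm of a lattice vector. -/
def vnorm {d : ℕ} (x : V d) : ℝ := rnorm (toR x)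

/-- The `i`-th coordinate unit vector of `ℤ^d`. -/
def unit {d : ℕ} (i : Fin d) : V d := fun j => if j = i then 1 else 0

/-- Nearest-neighbour adjacency on `ℤ^d`. -/
def adj {d : ℕ} (x y : V d) : Prop := (∑ i, |x i - y i|) = 1

/-- A configuration of conductances on `ℤ^d`: nonnegative, symmetric, with
`π_ω(x) = ∑_y ω_{xy} ∈ (0,∞)` for every `x`. -/
structure Cfg (d : ℕ) where
  w : V d → V d → ℝ
  nonneg : ∀ x y, 0 ≤ w x y
  symm : ∀ x y, w x y = w y x
  summ : ∀ x, Summable fun y => w x y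
  pos : ∀ x, 0 < ∑' y, w x y

variable {d : ℕ}

/-- The product σ-algebra on the space of conductance configurations. -/
instance : MeasurableSpace (Cfg d) := MeasurableSpace.comap Cfg.w inferInstance

/-- `π_ω(x) := ∑_y ω_{xy}`. -/
def piC (ω : Cfg d) (x : V d) : ℝ := ∑' y, ω.w x y

/-- The one-step transition probabilities `P_ω(x,y) = ω_{xy}/π_ω(x)` of the random walk
among the conductances `ω`. -/
def step (ω : Cfg d) (x y : V d) : ℝ := ω.w x y / piC ω x

/-- `n`-step transition probabilities `P_ω^n(x,y)`. -/
def Pn (ω : Cfg d) : ℕ → V d → V d → ℝ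
  | 0, x, y => if x = y then 1 else 0
  | n + 1, x, y => ∑' z, Pn ω n x z * step ω z y

/-- The shift `τ_z` acting on configurations: `(τ_zω)_{xy} = ω_{x+z,y+z}`. -/
def shiftC (z : V d) (ω : Cfg d) : Cfg d where
  w x y := ω.w (x + z) (y + z)
  nonneg x y := ω.nonneg _ _
  symm x y := ω.symm _ _
  summ x := by
    have h := (Equiv.addRight z).summable_iff (f := fun y => ω.w (x + z) y)
    exact h.mpr (ω.summ (x + z))
  pos x := by
    have h := (Equiv.addRight z).tsum_eq (f := fun y => ω.w (x + z) y)
    simp only [Equiv.coe_addRight] at h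
    calc (0:ℝ) < ∑' y, ω.w (x + z) y := ω.pos (x + z)
    _ = ∑' y, ω.w (x + z) (y + z) := h.symm

/-- The law of the discrete-time random walk among the conductances `ω` started at `x₀`,
characterized through its cylinder probabilities. -/
def IsPathLaw (ω : Cfg d) (x₀ : V d) (μ : Measure (ℕ → V d)) : Prop :=
  IsProbabilityMeasure μ ∧
  ∀ (n : ℕ) (p : ℕ → V d),
    μ {X | ∀ i ≤ n, X i = p i} =
      ENNReal.ofReal ((if p 0 = x₀ then (1:ℝ) else 0) *
        ∏ i ∈ Finset.range n, step ω (p i) (p (i + 1)))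

/-- The measure `ℚ(dω) = Z⁻¹ π_ω(0) ℙ(dω)`. -/
def Qmeas (P : Measure (Cfg d)) : Measure (Cfg d) :=
  (ENNReal.ofReal (∫ ω, piC ω 0 ∂P))⁻¹ •
    P.withDensity fun ω => ENNReal.ofReal (piC ω 0)

/-- Bounded measurable real functions on the space of environments. -/
def BddMeas (f : Cfg d → ℝ) : Prop := Measurable f ∧ ∃ C, ∀ ω, |f ω| ≤ C

/-- The "usual conditions" on an environment law: a translation-invariant probability
measure with `𝔼 π_ω(0) < ∞`, irreducible, and ergodic with respect to translations. -/
structure UsualConds (P : Measure (Cfg d)) : Prop where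
  prob : IsProbabilityMeasure P
  inv : ∀ z : V d, MeasurePreserving (shiftC z) P P
  integ : Integrable (fun ω => piC ω 0) P
  irred : ∀ x : V d, P {ω | ∃ n, 0 < Pn ω n 0 x} = 1
  erg : ∀ A : Set (Cfg d), MeasurableSet A → (∀ z, shiftC z ⁻¹' A = A) → P A = 0 ∨ P A = 1

/-- The transition kernel `𝒫` of the environment seen from the particle, applied to a
function `g`: `(𝒫 g)(ω) = ∑_x P_ω(0,x) g(τ_x ω)`. -/
def envK (g : Cfg d → ℝ) (ω : Cfg d) : ℝ := ∑' x, step ω 0 x * g (shiftC x ω)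

/-- A local function of the environment: a bounded continuous function of finitely many
conductances. -/
def IsLocal (φ : Cfg d → (Fin d → ℝ)) : Prop :=
  (∃ C, ∀ ω, rnorm (φ ω) ≤ C) ∧
  ∃ (S : Finset (V d × V d)) (g : ((V d × V d) → ℝ) → Fin d → ℝ),
    Continuous g ∧ ∀ ω, φ ω = g fun e => if e ∈ S then ω.w e.1 e.2 else 0

/-- The gradient `∇φ(ω,x) := φ(τ_xω) − φ(ω)` of a function of the environment. -/
def grad (φ : Cfg d → (Fin d → ℝ)) (ω : Cfg d) (x : V d) : Fin d → ℝ :=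
  φ (shiftC x ω) - φ ω

/-- The squared `L²`-norm `𝔼(∑_x ω_{0,x} |u(ω,x)|²)` of a vector field. -/
def energy (P : Measure (Cfg d)) (u : Cfg d → V d → Fin d → ℝ) : ℝ≥0∞ :=
  ∫⁻ ω, ∑' x, ENNReal.ofReal (ω.w 0 x * rnorm (u ω x) ^ 2) ∂P

/-- The Dirichlet functional `φ ↦ 𝔼(∑_x ω_{0,x} |x + ∇_xφ(ω)|²)`. -/
def dirichlet (P : Measure (Cfg d)) (φ : Cfg d → (Fin d → ℝ)) : ℝ≥0∞ :=
  energy P fun ω x => toR x + grad φ ω x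

/-- The infimum of the Dirichlet functional over local functions. -/
def dirichletInf (P : Measure (Cfg d)) : ℝ≥0∞ :=
  ⨅ φ : {φ : Cfg d → Fin d → ℝ // IsLocal φ}, dirichlet P φ.1

/-- `χ` is the corrector for the environment law `P`: a shift-covariant measurable
function which is the `L²`-limit of the gradients of some minimizing sequence of the
Dirichlet functional. -/
def IsCorrector (P : Measure (Cfg d)) (χ : Cfg d → V d → Fin d → ℝ) : Prop :=
  (∀ x, Measurable fun ω => χ ω x) ∧
  (∀ ω, χ ω 0 = 0) ∧
  (∀ ω x z, χ ω (x + z) - χ ω x = χ (shiftC x ω) z) ∧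
  ∃ φs : ℕ → Cfg d → Fin d → ℝ,
    (∀ n, IsLocal (φs n)) ∧
    Tendsto (fun n => dirichlet P (φs n)) atTop (𝓝 (dirichletInf P)) ∧
    Tendsto (fun n => energy P fun ω x => grad (φs n) ω x - χ ω x) atTop (𝓝 0)

/-- The harmonic coordinate `Ψ(ω,x) := x + χ(ω,x)`. -/
def Psi (χ : Cfg d → V d → Fin d → ℝ) (ω : Cfg d) (x : V d) : Fin d → ℝ :=
  toR x + χ ω x

/-- The second-moment condition `𝔼(∑_x ω_{0,x}|x|²) < ∞`. -/
def SecondMoment (P : Measure (Cfg d)) : Prop :=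
  ∫⁻ ω, ∑' x, ENNReal.ofReal (ω.w 0 x * vnorm x ^ 2) ∂P < ⊤

/-- The inverse-moment condition `𝔼(1/ω_{0,x}) < ∞`. -/
def InvMoment (P : Measure (Cfg d)) (x : V d) : Prop :=
  ∫⁻ ω, (ENNReal.ofReal (ω.w 0 x))⁻¹ ∂P < ⊤

/-- The set `N` of admissible jumps of the walk (together with `0`). -/
def Nset (P : Measure (Cfg d)) : Set (V d) :=
  {x | 0 < P {ω | 0 < ω.w 0 x}} ∪ {0}

/-- The inner product `⟨u,v⟩ = 𝔼(∑_{x∈N} ω_{0,x} u(ω,x)·v(ω,x))` on vector fields. -/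
def iprodN (P : Measure (Cfg d)) (u v : Cfg d → V d → Fin d → ℝ) : ℝ :=
  ∫ ω, ∑' x : ↥(Nset P), ω.w 0 (x : V d) * ∑ i, u ω x i * v ω x i ∂P

/-- The squared norm `𝔼(∑_{x∈N} ω_{0,x}|u(ω,x)|²)` of a vector field. -/
def energyN (P : Measure (Cfg d)) (u : Cfg d → V d → Fin d → ℝ) : ℝ≥0∞ :=
  ∫⁻ ω, ∑' x : ↥(Nset P), ENNReal.ofReal (ω.w 0 (x : V d) * rnorm (u ω x) ^ 2) ∂P

/-- Membership in `L²_cov`: a measurable shift-covariant square-integrable vector field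
(vanishing at `x = 0`). -/
def MemL2cov (P : Measure (Cfg d)) (u : Cfg d → V d → Fin d → ℝ) : Prop :=
  (∀ x, Measurable fun ω => u ω x) ∧
  (∀ ω, u ω 0 = 0) ∧
  (∀ ω x z, x ∈ Nset P → z ∈ Nset P → x + z ∈ Nset P →
    u ω (x + z) - u ω x = u (shiftC x ω) z) ∧
  energyN P u < ⊤

/-- Membership in `L²_∇`, the closure in `L²_cov` of the gradients of local functions. -/
def InGradClosure (P : Measure (Cfg d)) (u : Cfg d → V d → Fin d → ℝ) : Prop :=
  MemL2cov P u ∧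
  ∃ φs : ℕ → Cfg d → Fin d → ℝ, (∀ n, IsLocal (φs n)) ∧
    Tendsto (fun n => energyN P fun ω x => u ω x - grad (φs n) ω x) atTop (𝓝 0)

/-- The divergence `div(ωu)(ω) = ∑_{x∈N} ω_{0,x}[u(ω,x) − u(τ_xω,−x)]`. -/
def divN (P : Measure (Cfg d)) (u : Cfg d → V d → Fin d → ℝ) (ω : Cfg d) : Fin d → ℝ :=
  ∑' x : ↥(Nset P), ω.w 0 (x : V d) • (u ω (x : V d) - u (shiftC (x : V d) ω) (-(x : V d)))

variable {P : Measure (Cfg d)}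

theorem Cfg.ext' {ω ω' : Cfg d} (h : ω.w = ω'.w) : ω = ω' := by
  cases ω; cases ω'; simpa using h

@[simp] theorem shiftC_w (z : V d) (ω : Cfg d) (a b : V d) :
    (shiftC z ω).w a b = ω.w (a + z) (b + z) := rfl

@[simp] theorem shiftC_zero (ω : Cfg d) : shiftC 0 ω = ω := by
  apply Cfg.ext'; funext a b; simp

theorem shiftC_shiftC (x z : V d) (ω : Cfg d) :
    shiftC z (shiftC x ω) = shiftC (x + z) ω := by
  apply Cfg.ext'; funext a b
  simp [add_assoc, add_comm x z]

theorem measurable_w (a b : V d) : Measurable fun ω : Cfg d => ω.w a b := by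
  have h1 : Measurable (Cfg.w : Cfg d → (V d → V d → ℝ)) :=
    Measurable.of_comap_le le_rfl
  exact ((measurable_pi_apply b).comp ((measurable_pi_apply a).comp h1))

theorem measurable_shiftC (z : V d) : Measurable (shiftC z : Cfg d → Cfg d) := by
  intro s hs
  obtain ⟨B, hB, rfl⟩ := hs
  have hgf : Measurable fun ω : Cfg d => (shiftC z ω).w := by
    apply measurable_pi_lambda; intro a
    apply measurable_pi_lambda; intro b
    exact measurable_w (a + z) (b + z)
  exact hgf hB

/-- The shift as a measurable equiv. -/
def shiftE (z : V d) : Cfg d ≃ᵐ Cfg d where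
  toFun := shiftC z
  invFun := shiftC (-z)
  left_inv := fun ω => by rw [shiftC_shiftC]; simp
  right_inv := fun ω => by rw [shiftC_shiftC]; simp
  measurable_toFun := measurable_shiftC z
  measurable_invFun := measurable_shiftC (-z)

theorem zero_mem_Nset : (0 : V d) ∈ Nset P := Or.inr rfl

theorem neg_mem_Nset (hP : UsualConds P) {x : V d} (hx : x ∈ Nset P) :
    -x ∈ Nset P := by
  rcases hx with hx | hx
  · left
    have hset : {ω : Cfg d | 0 < ω.w 0 x} = shiftC x ⁻¹' {ω : Cfg d | 0 < ω.w 0 (-x)} := by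
      ext ω; simp only [Set.mem_preimage, Set.mem_setOf_eq, shiftC_w, zero_add, neg_add_cancel]
      rw [ω.symm x 0]
    have hm : MeasurableSet {ω : Cfg d | 0 < ω.w 0 (-x)} :=
      measurableSet_lt measurable_const (measurable_w 0 (-x))
    have := (hP.inv x).measure_preimage hm.nullMeasurableSet
    rw [← hset] at this
    simpa [← this] using hx
  · rw [Set.mem_singleton_iff] at hx; subst hx; right; simp

/-! ### Euclidean norm lemmas -/

theorem rnorm_eq (v : Fin d → ℝ) :
    rnorm v = ‖(WithLp.equiv 2 (Fin d → ℝ)).symm v‖ := by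
  rw [rnorm, EuclideanSpace.norm_eq]
  congr 1
  refine Finset.sum_congr rfl fun i _ => ?_
  rw [Real.norm_eq_abs, sq_abs]; rfl

theorem rnorm_nonneg (v : Fin d → ℝ) : 0 ≤ rnorm v := Real.sqrt_nonneg _

@[simp] theorem rnorm_zero : rnorm (0 : Fin d → ℝ) = 0 := by
  simp [rnorm]

theorem rnorm_smul (a : ℝ) (v : Fin d → ℝ) : rnorm (a • v) = |a| * rnorm v := by
  rw [rnorm_eq, rnorm_eq]
  have : (WithLp.equiv 2 (Fin d → ℝ)).symm (a • v) =
      a • (WithLp.equiv 2 (Fin d → ℝ)).symm v := by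
    rfl
  rw [this, norm_smul, Real.norm_eq_abs]

theorem rnorm_sub_le (v w : Fin d → ℝ) : rnorm (v - w) ≤ rnorm v + rnorm w := by
  rw [rnorm_eq, rnorm_eq, rnorm_eq]
  have : (WithLp.equiv 2 (Fin d → ℝ)).symm (v - w) =
      (WithLp.equiv 2 (Fin d → ℝ)).symm v - (WithLp.equiv 2 (Fin d → ℝ)).symm w := by
    rfl
  rw [this]
  exact norm_sub_le _ _

theorem abs_dot_le (v w : Fin d → ℝ) : |∑ i, v i * w i| ≤ rnorm v * rnorm w := by
  rw [rnorm_eq, rnorm_eq]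
  have h := abs_real_inner_le_norm ((WithLp.equiv 2 (Fin d → ℝ)).symm v)
      ((WithLp.equiv 2 (Fin d → ℝ)).symm w)
  rw [PiLp.inner_apply] at h
  simpa [WithLp.equiv_symm_apply, RCLike.inner_apply, mul_comm] using h

theorem norm_le_rnorm (v : Fin d → ℝ) : ‖v‖ ≤ rnorm v := by
  rw [pi_norm_le_iff_of_nonneg (rnorm_nonneg v)]
  intro i
  rw [Real.norm_eq_abs, ← Real.sqrt_sq_eq_abs]
  exact Real.sqrt_le_sqrt (Finset.single_le_sum (fun j _ => sq_nonneg (v j)) (Finset.mem_univ i))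

theorem measurable_rnorm {α} [MeasurableSpace α] {g : α → Fin d → ℝ} (hg : Measurable g) :
    Measurable fun a => rnorm (g a) := by
  have hc : Continuous fun v : Fin d → ℝ => rnorm v := by
    simp only [rnorm]
    exact Real.continuous_sqrt.comp (continuous_finset_sum _ fun i _ =>
      (continuous_apply i).pow 2)
  exact hc.measurable.comp hg

/-! ### Real `tsum` infrastructure -/

theorem summable_iff_nnorm_tsum_ne_top {ι : Type*} [Countable ι] (f : ι → ℝ) :
    Summable f ↔ (∑' i, (‖f i‖₊ : ℝ≥0∞)) ≠ ⊤ := by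
  rw [ENNReal.tsum_coe_ne_top_iff_summable]
  constructor
  · intro h
    have := summable_abs_iff.mpr h
    rw [← NNReal.summable_coe]
    simpa [Real.norm_eq_abs] using this
  · intro h
    rw [← NNReal.summable_coe] at h
    simp only [coe_nnnorm, Real.norm_eq_abs] at h
    exact summable_abs_iff.mp h

theorem tsum_posneg {ι : Type*} [Countable ι] (f : ι → ℝ) (hf : Summable f) :
    ∑' i, f i =
      (∑' i, ENNReal.ofReal (f i)).toReal - (∑' i, ENNReal.ofReal (-f i)).toReal := by
  have habs : Summable fun i => |f i| := summable_abs_iff.mpr hf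
  have hp : ∀ i, 0 ≤ (f i + |f i|) / 2 := fun i => by
    have := neg_abs_le (f i); linarith
  have hm : ∀ i, 0 ≤ (|f i| - f i) / 2 := fun i => by
    have := le_abs_self (f i); linarith
  have hplus : Summable fun i => (f i + |f i|) / 2 := (hf.add habs).div_const 2
  have hminus : Summable fun i => (|f i| - f i) / 2 := (habs.sub hf).div_const 2
  have h1 : ∑' i, ENNReal.ofReal (f i) = ENNReal.ofReal (∑' i, (f i + |f i|) / 2) := by
    rw [ENNReal.ofReal_tsum_of_nonneg hp hplus]
    refine tsum_congr fun i => ?_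
    rcases le_total 0 (f i) with h | h
    · rw [abs_of_nonneg h]; ring_nf
    · rw [abs_of_nonpos h]; rw [ENNReal.ofReal_of_nonpos h]; simp
  have h2 : ∑' i, ENNReal.ofReal (-f i) = ENNReal.ofReal (∑' i, (|f i| - f i) / 2) := by
    rw [ENNReal.ofReal_tsum_of_nonneg hm hminus]
    refine tsum_congr fun i => ?_
    rcases le_total 0 (f i) with h | h
    · rw [abs_of_nonneg h]; rw [ENNReal.ofReal_of_nonpos (by linarith)]; simp
    · rw [abs_of_nonpos h]; ring_nf
  rw [h1, h2, ENNReal.toReal_ofReal (tsum_nonneg hp),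
    ENNReal.toReal_ofReal (tsum_nonneg hm),
    ← hplus.tsum_sub hminus]
  exact tsum_congr fun i => by ring

/-! ### Measurability of `tsum` -/

theorem measurable_tsum_pi {α : Type*} [MeasurableSpace α] {ι : Type*} [Countable ι]
    {f : ι → α → Fin d → ℝ} (hf : ∀ i, Measurable (f i)) :
    Measurable fun a => ∑' i, f i a := by
  classical
  have hcomp : ∀ i j, Measurable fun a => f i a j := fun i j =>
    (measurable_pi_apply j).comp (hf i)
  set G : Set α := {a | ∀ j, (∑' i, (‖f i a j‖₊ : ℝ≥0∞)) ≠ ⊤} with hG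
  have hGm : MeasurableSet G := by
    have : G = ⋂ j, {a | (∑' i, (‖f i a j‖₊ : ℝ≥0∞)) ≠ ⊤} := by
      ext a; simp [hG]
    rw [this]
    refine MeasurableSet.iInter fun j => ?_
    have hm : Measurable fun a => ∑' i, (‖f i a j‖₊ : ℝ≥0∞) :=
      Measurable.ennreal_tsum fun i => (hcomp i j).nnnorm.coe_nnreal_ennreal
    exact (hm (measurableSet_singleton ⊤)).compl
  have heq : (fun a => ∑' i, f i a) = fun a =>
      if a ∈ G then
        (fun j => (∑' i, ENNReal.ofReal (f i a j)).toReal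
          - (∑' i, ENNReal.ofReal (-(f i a j))).toReal)
      else 0 := by
    funext a
    by_cases hGa : a ∈ G
    · rw [if_pos hGa]
      have hsum : ∀ j, Summable fun i => f i a j := fun j =>
        (summable_iff_nnorm_tsum_ne_top _).mpr (hGa j)
      have hSpi : Summable fun i => f i a := by
        rw [Pi.summable]; exact hsum
      funext j
      rw [tsum_apply hSpi]
      exact tsum_posneg _ (hsum j)
    · rw [if_neg hGa]
      apply tsum_eq_zero_of_not_summable
      intro hcon
      exact hGa fun j =>
        (summable_iff_nnorm_tsum_ne_top _).mp (Pi.summable.mp hcon j)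
  rw [heq]
  refine Measurable.ite hGm ?_ measurable_const
  refine measurable_pi_lambda _ fun j => Measurable.sub ?_ ?_
  · exact (Measurable.ennreal_tsum fun i =>
      ENNReal.measurable_ofReal.comp (hcomp i j)).ennreal_toReal
  · exact (Measurable.ennreal_tsum fun i =>
      ENNReal.measurable_ofReal.comp (hcomp i j).neg).ennreal_toReal

theorem measurable_tsum_real {α : Type*} [MeasurableSpace α] {ι : Type*} [Countable ι]
    {f : ι → α → ℝ} (hf : ∀ i, Measurable (f i)) :
    Measurable fun a => ∑' i, f i a := by
  have h := measurable_tsum_pi (d := 1) (f := fun i a => fun _ : Fin 1 => f i a)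
    (fun i => measurable_pi_lambda _ fun _ => hf i)
  have heq : (fun a => ∑' i, f i a) =
      fun a => (∑' i, (fun _ : Fin 1 => f i a)) 0 := by
    funext a
    by_cases hs : Summable fun i => f i a
    · rw [tsum_apply]
      rw [Pi.summable]; exact fun _ => hs
    · rw [tsum_eq_zero_of_not_summable hs, tsum_eq_zero_of_not_summable]
      · rfl
      · intro hcon; exact hs (Pi.summable.mp hcon 0)
  rw [heq]
  exact (measurable_pi_apply 0).comp h

/-! ### The field `S(ω) = ∑_{x∈N} ω_{0x} u(ω,x)` -/

variable (P) (u : Cfg d → V d → Fin d → ℝ)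

/-- `S(ω) := ∑_{x∈N} ω_{0x} u(ω,x)`. -/
def Sfun (ω : Cfg d) : Fin d → ℝ :=
  ∑' x : ↥(Nset P), ω.w 0 (x : V d) • u ω (x : V d)

/-- `∑_{x∈N} ω_{0x} |u(ω,x)|` as an extended real. -/
def Wfull (ω : Cfg d) : ℝ≥0∞ :=
  ∑' x : ↥(Nset P), ENNReal.ofReal (ω.w 0 (x : V d) * rnorm (u ω (x : V d)))

variable {P} {u}

theorem piC_nonneg (ω : Cfg d) (x : V d) : 0 ≤ piC ω x :=
  tsum_nonneg fun y => ω.nonneg x y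

theorem u_shift_neg (hP : UsualConds P) (hu : MemL2cov P u) {x : V d}
    (hx : x ∈ Nset P) (ω : Cfg d) : u (shiftC x ω) (-x) = - u ω x := by
  have h := hu.2.2.1 ω x (-x) hx (neg_mem_Nset hP hx) (by simpa using zero_mem_Nset)
  rw [add_neg_cancel, hu.2.1 ω] at h
  rw [← h]; abel

theorem divN_eq_two_smul (hP : UsualConds P) (hu : MemL2cov P u) (ω : Cfg d) :
    divN P u ω = (2 : ℝ) • Sfun P u ω := by
  rw [divN, Sfun, ← tsum_const_smul'' (2 : ℝ)]
  refine tsum_congr fun x => ?_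
  rw [u_shift_neg hP hu x.2 ω, smul_smul, sub_neg_eq_add,
    ← two_smul ℝ (u ω (x : V d)), smul_smul, mul_comm]

theorem measurable_Sfun (hu : MemL2cov P u) : Measurable (Sfun P u) :=
  measurable_tsum_pi fun x => ((measurable_w 0 (x : V d)).smul (hu.1 (x : V d)))

theorem measurable_Wfull (hu : MemL2cov P u) : Measurable (Wfull P u) :=
  Measurable.ennreal_tsum fun x => ENNReal.measurable_ofReal.comp
    ((measurable_w 0 (x : V d)).mul (measurable_rnorm (hu.1 (x : V d))))

theorem tsum_ofReal_w_le (ω : Cfg d) :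
    ∑' x : ↥(Nset P), ENNReal.ofReal (ω.w 0 (x : V d)) ≤ ENNReal.ofReal (piC ω 0) := by
  calc ∑' x : ↥(Nset P), ENNReal.ofReal (ω.w 0 (x : V d))
      = ∑' y, Set.indicator (Nset P) (fun y => ENNReal.ofReal (ω.w 0 y)) y :=
        (tsum_subtype (Nset P) fun y => ENNReal.ofReal (ω.w 0 y))
    _ ≤ ∑' y, ENNReal.ofReal (ω.w 0 y) :=
        ENNReal.tsum_le_tsum fun y => Set.indicator_le_self _ _ y
    _ = ENNReal.ofReal (piC ω 0) :=
        (ENNReal.ofReal_tsum_of_nonneg (fun y => ω.nonneg 0 y) (ω.summ 0)).symm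

theorem Wfull_two_le (ω : Cfg d) :
    2 * Wfull P u ω ≤ ENNReal.ofReal (piC ω 0) +
      ∑' x : ↥(Nset P), ENNReal.ofReal (ω.w 0 (x : V d) * rnorm (u ω (x : V d)) ^ 2) := by
  rw [Wfull, ← ENNReal.tsum_mul_left]
  have hle : ∀ x : ↥(Nset P),
      2 * ENNReal.ofReal (ω.w 0 (x : V d) * rnorm (u ω (x : V d))) ≤
        ENNReal.ofReal (ω.w 0 (x : V d)) +
          ENNReal.ofReal (ω.w 0 (x : V d) * rnorm (u ω (x : V d)) ^ 2) := by
    intro x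
    set w := ω.w 0 (x : V d) with hw
    set r := rnorm (u ω (x : V d)) with hr
    have hw0 : 0 ≤ w := ω.nonneg _ _
    have hr0 : 0 ≤ r := rnorm_nonneg _
    calc 2 * ENNReal.ofReal (w * r) = ENNReal.ofReal (2 * (w * r)) := by
          rw [ENNReal.ofReal_mul (by norm_num : (0:ℝ) ≤ 2)]
          norm_num
      _ ≤ ENNReal.ofReal (w + w * r ^ 2) := by
          apply ENNReal.ofReal_le_ofReal; nlinarith [sq_nonneg (r - 1)]
      _ ≤ ENNReal.ofReal w + ENNReal.ofReal (w * r ^ 2) := ENNReal.ofReal_add_le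
  calc ∑' x : ↥(Nset P), 2 * ENNReal.ofReal (ω.w 0 (x : V d) * rnorm (u ω (x : V d)))
      ≤ ∑' x : ↥(Nset P), (ENNReal.ofReal (ω.w 0 (x : V d)) +
          ENNReal.ofReal (ω.w 0 (x : V d) * rnorm (u ω (x : V d)) ^ 2)) :=
        ENNReal.tsum_le_tsum hle
    _ = (∑' x : ↥(Nset P), ENNReal.ofReal (ω.w 0 (x : V d))) +
        ∑' x : ↥(Nset P), ENNReal.ofReal (ω.w 0 (x : V d) * rnorm (u ω (x : V d)) ^ 2) :=
        ENNReal.tsum_add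
    _ ≤ _ := add_le_add_left (tsum_ofReal_w_le ω) _

theorem lintegral_Wfull_lt_top (hP : UsualConds P) (hu : MemL2cov P u) :
    ∫⁻ ω, Wfull P u ω ∂P < ⊤ := by
  have h2 : (2 : ℝ≥0∞) * ∫⁻ ω, Wfull P u ω ∂P ≤
      (∫⁻ ω, ENNReal.ofReal (piC ω 0) ∂P) + energyN P u := by
    rw [← lintegral_const_mul 2 (measurable_Wfull hu)]
    have hπ : Measurable fun ω : Cfg d => ENNReal.ofReal (piC ω 0) :=
      ENNReal.measurable_ofReal.comp
        (measurable_tsum_real fun y => measurable_w 0 y)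
    rw [energyN, ← lintegral_add_left hπ]
    exact lintegral_mono fun ω => Wfull_two_le ω
  have hfin : (∫⁻ ω, ENNReal.ofReal (piC ω 0) ∂P) + energyN P u < ⊤ :=
    ENNReal.add_lt_top.mpr ⟨hP.integ.lintegral_lt_top, hu.2.2.2⟩
  have hle : ∫⁻ ω, Wfull P u ω ∂P ≤ 2 * ∫⁻ ω, Wfull P u ω ∂P :=
    le_mul_of_one_le_left zero_le' (by norm_num)
  exact lt_of_le_of_lt (hle.trans h2) hfin

theorem ae_Wfull_ne_top (hP : UsualConds P) (hu : MemL2cov P u) :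
    ∀ᵐ ω ∂P, Wfull P u ω ≠ ⊤ := by
  filter_upwards [ae_lt_top (measurable_Wfull hu) (lintegral_Wfull_lt_top hP hu).ne]
    with ω h using h.ne

theorem summable_of_abs_le {ι : Type*} [Countable ι] {f g : ι → ℝ}
    (hg : Summable g) (h : ∀ i, |f i| ≤ g i) : Summable f :=
  summable_abs_iff.mp (Summable.of_nonneg_of_le (fun i => abs_nonneg _) h hg)

theorem summable_w_rnorm_of {ω : Cfg d} (hW : Wfull P u ω ≠ ⊤) :
    Summable fun x : ↥(Nset P) => ω.w 0 (x : V d) * rnorm (u ω (x : V d)) := by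
  rw [summable_iff_nnorm_tsum_ne_top]
  have : ∀ x : ↥(Nset P), (‖ω.w 0 (x : V d) * rnorm (u ω (x : V d))‖₊ : ℝ≥0∞) =
      ENNReal.ofReal (ω.w 0 (x : V d) * rnorm (u ω (x : V d))) := fun x =>
    Real.enorm_eq_ofReal (mul_nonneg (ω.nonneg _ _) (rnorm_nonneg _))
  rw [tsum_congr this]
  exact hW

theorem summable_smul_of {ω : Cfg d} (hW : Wfull P u ω ≠ ⊤) :
    Summable fun x : ↥(Nset P) => ω.w 0 (x : V d) • u ω (x : V d) := by
  apply Summable.of_norm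
  apply Summable.of_nonneg_of_le (fun x => norm_nonneg _) _ (summable_w_rnorm_of hW)
  intro x
  rw [norm_smul, Real.norm_eq_abs, abs_of_nonneg (ω.nonneg _ _)]
  exact mul_le_mul_of_nonneg_left (norm_le_rnorm _) (ω.nonneg _ _)

theorem integral_shift (hP : UsualConds P) (z : V d) (f : Cfg d → ℝ) :
    ∫ ω, f (shiftC z ω) ∂P = ∫ ω, f ω ∂P := by
  have h : MeasurePreserving (shiftE z : Cfg d ≃ᵐ Cfg d) P P := hP.inv z
  exact h.integral_comp' f

/-! ### More helpers -/

theorem apply_le_rnorm (v : Fin d → ℝ) (i : Fin d) : |v i| ≤ rnorm v :=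
  le_trans (by simpa [Real.norm_eq_abs] using norm_le_pi_norm v i) (norm_le_rnorm v)

theorem abs_tsum_le {ι : Type*} [Countable ι] {f g : ι → ℝ}
    (hfg : ∀ i, |f i| ≤ g i) (hg : Summable g) : |∑' i, f i| ≤ ∑' i, g i := by
  have hf : Summable f := summable_of_abs_le hg hfg
  calc |∑' i, f i| ≤ ∑' i, |f i| := by
        simpa [Real.norm_eq_abs] using norm_tsum_le_tsum_norm (f := f)
          (by simpa [Real.norm_eq_abs] using summable_abs_iff.mpr hf)
    _ ≤ ∑' i, g i := Summable.tsum_le_tsum hfg (summable_abs_iff.mpr hf) hg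

theorem tsum_w_rnorm_eq {ω : Cfg d} (hW : Wfull P u ω ≠ ⊤) :
    ∑' x : ↥(Nset P), ω.w 0 (x : V d) * rnorm (u ω (x : V d)) = (Wfull P u ω).toReal := by
  rw [Wfull, ← ENNReal.ofReal_tsum_of_nonneg
    (fun x => mul_nonneg (ω.nonneg _ _) (rnorm_nonneg _)) (summable_w_rnorm_of hW),
    ENNReal.toReal_ofReal (tsum_nonneg fun x => mul_nonneg (ω.nonneg _ _) (rnorm_nonneg _))]

theorem abs_wdot_le {ω : Cfg d} (x : ↥(Nset P)) (ψ : Fin d → ℝ) {C : ℝ}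
    (hC : rnorm ψ ≤ C) :
    |ω.w 0 (x : V d) * ∑ i, u ω (x : V d) i * ψ i| ≤
      ω.w 0 (x : V d) * rnorm (u ω (x : V d)) * C := by
  rw [abs_mul, abs_of_nonneg (ω.nonneg _ _), mul_assoc]
  refine mul_le_mul_of_nonneg_left ?_ (ω.nonneg _ _)
  calc |∑ i, u ω (x : V d) i * ψ i| ≤ rnorm (u ω (x : V d)) * rnorm ψ := abs_dot_le _ _
    _ ≤ rnorm (u ω (x : V d)) * C := by
        exact mul_le_mul_of_nonneg_left hC (rnorm_nonneg _)

theorem summable_wdot {ω : Cfg d} (hW : Wfull P u ω ≠ ⊤) (ψ : ↥(Nset P) → Fin d → ℝ)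
    {C : ℝ} (hC : ∀ x, rnorm (ψ x) ≤ C) :
    Summable fun x : ↥(Nset P) => ω.w 0 (x : V d) * ∑ i, u ω (x : V d) i * ψ x i :=
  summable_of_abs_le ((summable_w_rnorm_of hW).mul_right C)
    (fun x => abs_wdot_le x (ψ x) (hC x))

theorem tsum_wdot_eq {ω : Cfg d} (hW : Wfull P u ω ≠ ⊤) (c : Fin d → ℝ) :
    ∑' x : ↥(Nset P), ω.w 0 (x : V d) * ∑ i, u ω (x : V d) i * c i =
      ∑ i, Sfun P u ω i * c i := by
  have hsm : ∀ i : Fin d, Summable fun x : ↥(Nset P) => ω.w 0 (x : V d) * u ω (x : V d) i :=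
    fun i => summable_of_abs_le (summable_w_rnorm_of hW) (fun x => by
      rw [abs_mul, abs_of_nonneg (ω.nonneg _ _)]
      exact mul_le_mul_of_nonneg_left (apply_le_rnorm _ i) (ω.nonneg _ _))
  have h1 : ∀ x : ↥(Nset P), ω.w 0 (x : V d) * ∑ i, u ω (x : V d) i * c i =
      ∑ i, (ω.w 0 (x : V d) * u ω (x : V d) i) * c i := by
    intro x; rw [Finset.mul_sum]; exact Finset.sum_congr rfl fun i _ => by ring
  rw [tsum_congr h1, Summable.tsum_finsetSum (fun i _ => (hsm i).mul_right (c i))]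
  refine Finset.sum_congr rfl fun i _ => ?_
  rw [tsum_mul_right]
  congr 1
  rw [Sfun, tsum_apply (summable_smul_of hW)]
  exact tsum_congr fun x => rfl

/-- `(Wfull ω).toReal`, an integrable dominating function. -/
def Mw (P : Measure (Cfg d)) (u : Cfg d → V d → Fin d → ℝ) (ω : Cfg d) : ℝ :=
  (Wfull P u ω).toReal

theorem integrable_Mw (hP : UsualConds P) (hu : MemL2cov P u) :
    Integrable (Mw P u) P :=
  integrable_toReal_of_lintegral_ne_top (measurable_Wfull hu).aemeasurable
    (lintegral_Wfull_lt_top hP hu).ne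

theorem Mw_nonneg (ω : Cfg d) : 0 ≤ Mw P u ω := ENNReal.toReal_nonneg

/-! ### Local functions -/

theorem IsLocal.measurable' {φ : Cfg d → Fin d → ℝ} (hφ : IsLocal φ) : Measurable φ := by
  classical
  obtain ⟨-, S, g, hg, hrep⟩ := hφ
  have : φ = g ∘ fun ω : Cfg d => fun e : V d × V d => if e ∈ S then ω.w e.1 e.2 else 0 :=
    funext hrep
  rw [this]
  refine hg.measurable.comp (measurable_pi_lambda _ fun e => ?_)
  by_cases he : e ∈ S
  · simpa [he] using measurable_w e.1 e.2
  · simpa [he] using (measurable_const : Measurable fun _ : Cfg d => (0:ℝ))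

theorem IsLocal.bound {φ : Cfg d → Fin d → ℝ} (hφ : IsLocal φ) :
    ∃ C, 0 ≤ C ∧ ∀ ω, rnorm (φ ω) ≤ C := by
  obtain ⟨⟨C, hC⟩, -⟩ := hφ
  exact ⟨max C 0, le_max_right _ _, fun ω => le_trans (hC ω) (le_max_left _ _)⟩

/-! ### Gradients of bounded measurable functions -/

theorem measurable_grad {φ : Cfg d → Fin d → ℝ} (hφ : Measurable φ) (x : V d) :
    Measurable fun ω => grad φ ω x :=
  (hφ.comp (measurable_shiftC x)).sub hφ

theorem grad_zero' (φ : Cfg d → Fin d → ℝ) (ω : Cfg d) : grad φ ω 0 = 0 := by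
  rw [grad, shiftC_zero, sub_self]

theorem grad_cocycle (φ : Cfg d → Fin d → ℝ) (ω : Cfg d) (x z : V d) :
    grad φ ω (x + z) - grad φ ω x = grad φ (shiftC x ω) z := by
  simp only [grad, shiftC_shiftC]
  abel

theorem rnorm_grad_le {φ : Cfg d → Fin d → ℝ} {C : ℝ} (hC : ∀ ω, rnorm (φ ω) ≤ C)
    (ω : Cfg d) (x : V d) : rnorm (grad φ ω x) ≤ 2 * C := by
  rw [grad]
  calc rnorm (φ (shiftC x ω) - φ ω) ≤ rnorm (φ (shiftC x ω)) + rnorm (φ ω) :=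
        rnorm_sub_le _ _
    _ ≤ 2 * C := by have := hC (shiftC x ω); have := hC ω; linarith

theorem energyN_le_of_bound {v : Cfg d → V d → Fin d → ℝ} {C : ℝ} (hC0 : 0 ≤ C)
    (hC : ∀ ω x, rnorm (v ω x) ≤ C) (hP : UsualConds P) :
    energyN P v < ⊤ := by
  have hbound : ∀ ω : Cfg d,
      (∑' x : ↥(Nset P), ENNReal.ofReal (ω.w 0 (x : V d) * rnorm (v ω (x : V d)) ^ 2)) ≤
        ENNReal.ofReal (C ^ 2) * ENNReal.ofReal (piC ω 0) := by
    intro ω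
    calc ∑' x : ↥(Nset P), ENNReal.ofReal (ω.w 0 (x : V d) * rnorm (v ω (x : V d)) ^ 2)
        ≤ ∑' x : ↥(Nset P), ENNReal.ofReal (C ^ 2) * ENNReal.ofReal (ω.w 0 (x : V d)) := by
          refine ENNReal.tsum_le_tsum fun x => ?_
          rw [← ENNReal.ofReal_mul (by positivity)]
          apply ENNReal.ofReal_le_ofReal
          have h1 : rnorm (v ω (x : V d)) ^ 2 ≤ C ^ 2 := by
            have := rnorm_nonneg (v ω (x : V d)); nlinarith [hC ω (x : V d)]
          nlinarith [ω.nonneg 0 (x : V d)]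
      _ = ENNReal.ofReal (C ^ 2) * ∑' x : ↥(Nset P), ENNReal.ofReal (ω.w 0 (x : V d)) :=
          ENNReal.tsum_mul_left
      _ ≤ ENNReal.ofReal (C ^ 2) * ENNReal.ofReal (piC ω 0) := by
          exact mul_le_mul_right (tsum_ofReal_w_le ω) _
  calc energyN P v ≤ ∫⁻ ω, ENNReal.ofReal (C ^ 2) * ENNReal.ofReal (piC ω 0) ∂P :=
        lintegral_mono hbound
    _ = ENNReal.ofReal (C ^ 2) * ∫⁻ ω, ENNReal.ofReal (piC ω 0) ∂P := by
        rw [lintegral_const_mul]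
        exact ENNReal.measurable_ofReal.comp (measurable_tsum_real fun y => measurable_w 0 y)
    _ < ⊤ := ENNReal.mul_lt_top ENNReal.ofReal_lt_top hP.integ.lintegral_lt_top

theorem memL2cov_grad (hP : UsualConds P) {φ : Cfg d → Fin d → ℝ} (hφ : IsLocal φ) :
    MemL2cov P (grad φ) := by
  obtain ⟨C, hC0, hC⟩ := hφ.bound
  refine ⟨measurable_grad hφ.measurable', grad_zero' φ, fun ω x z _ _ _ => grad_cocycle φ ω x z, ?_⟩
  exact energyN_le_of_bound (by positivity) (rnorm_grad_le hC) hP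

theorem energyN_zero_field :
    energyN P (fun ω x => (0 : Fin d → ℝ)) = 0 := by
  rw [energyN]
  have : ∀ ω : Cfg d, ∑' x : ↥(Nset P), ENNReal.ofReal (ω.w 0 (x : V d) * rnorm (0:Fin d → ℝ) ^ 2)
      = 0 := by
    intro ω
    simp [rnorm_zero]
  simp only [this, lintegral_zero]

theorem inGradClosure_grad (hP : UsualConds P) {φ : Cfg d → Fin d → ℝ} (hφ : IsLocal φ) :
    InGradClosure P (grad φ) := by
  refine ⟨memL2cov_grad hP hφ, fun _ => φ, fun _ => hφ, ?_⟩
  have : (fun n : ℕ => energyN P fun ω x => grad φ ω x - grad φ ω x) = fun _ => 0 := by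
    funext n
    rw [show (fun (ω : Cfg d) (x : V d) => grad φ ω x - grad φ ω x)
      = fun ω x => (0 : Fin d → ℝ) by funext ω x; rw [sub_self]]
    exact energyN_zero_field
  rw [this]
  exact tendsto_const_nhds

/-! ### Integration by parts: `⟨u, ∇φ⟩ = -2 𝔼[S·φ]` -/

theorem measurable_wdot (hu : MemL2cov P u) {ψ : ↥(Nset P) → Cfg d → Fin d → ℝ}
    (hm : ∀ x, Measurable (ψ x)) (x : ↥(Nset P)) :
    Measurable fun ω => ω.w 0 (x : V d) * ∑ i, u ω (x : V d) i * ψ x ω i :=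
  (measurable_w 0 (x : V d)).mul (Finset.measurable_sum _ fun i _ =>
    ((measurable_pi_apply i).comp (hu.1 (x : V d))).mul
      ((measurable_pi_apply i).comp (hm x)))

theorem integrable_tsum_wdot (hP : UsualConds P) (hu : MemL2cov P u)
    {ψ : ↥(Nset P) → Cfg d → Fin d → ℝ} (hm : ∀ x, Measurable (ψ x))
    {C : ℝ} (hC : ∀ x ω, rnorm (ψ x ω) ≤ C) :
    Integrable (fun ω => ∑' x : ↥(Nset P),
      ω.w 0 (x : V d) * ∑ i, u ω (x : V d) i * ψ x ω i) P := by
  refine Integrable.mono' ((integrable_Mw hP hu).mul_const C)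
    (measurable_tsum_real (measurable_wdot hu hm)).aestronglyMeasurable ?_
  filter_upwards [ae_Wfull_ne_top hP hu] with ω hW
  rw [Real.norm_eq_abs]
  calc |∑' x : ↥(Nset P), ω.w 0 (x : V d) * ∑ i, u ω (x : V d) i * ψ x ω i|
      ≤ ∑' x : ↥(Nset P), ω.w 0 (x : V d) * rnorm (u ω (x : V d)) * C :=
        abs_tsum_le (fun x => abs_wdot_le x (ψ x ω) (hC x ω))
          ((summable_w_rnorm_of hW).mul_right C)
    _ = Mw P u ω * C := by rw [tsum_mul_right, tsum_w_rnorm_eq hW, Mw]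

theorem integral_tsum_wdot_comm (hP : UsualConds P) (hu : MemL2cov P u)
    {ψ : ↥(Nset P) → Cfg d → Fin d → ℝ} (hm : ∀ x, Measurable (ψ x))
    {C : ℝ} (hC0 : 0 ≤ C) (hC : ∀ x ω, rnorm (ψ x ω) ≤ C) :
    ∫ ω, (∑' x : ↥(Nset P), ω.w 0 (x : V d) * ∑ i, u ω (x : V d) i * ψ x ω i) ∂P =
      ∑' x : ↥(Nset P), ∫ ω, ω.w 0 (x : V d) * ∑ i, u ω (x : V d) i * ψ x ω i ∂P := by
  refine integral_tsum (fun x => (measurable_wdot hu hm x).aestronglyMeasurable) ?_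
  have hb : ∀ x : ↥(Nset P), ∫⁻ ω, ‖ω.w 0 (x : V d) * ∑ i, u ω (x : V d) i * ψ x ω i‖₊ ∂P ≤
      ∫⁻ ω, ENNReal.ofReal (ω.w 0 (x : V d) * rnorm (u ω (x : V d))) * ENNReal.ofReal C ∂P := by
    intro x
    refine lintegral_mono fun ω => ?_
    rw [← enorm_eq_nnnorm, Real.enorm_eq_ofReal_abs, ← ENNReal.ofReal_mul (mul_nonneg (ω.nonneg _ _) (rnorm_nonneg _))]
    exact ENNReal.ofReal_le_ofReal (abs_wdot_le x (ψ x ω) (hC x ω))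
  have hbig : ∑' x : ↥(Nset P), ∫⁻ ω, ‖ω.w 0 (x : V d) * ∑ i, u ω (x : V d) i * ψ x ω i‖₊ ∂P
      ≤ (∫⁻ ω, Wfull P u ω ∂P) * ENNReal.ofReal C := by
    calc ∑' x : ↥(Nset P), ∫⁻ ω, ‖ω.w 0 (x : V d) * ∑ i, u ω (x : V d) i * ψ x ω i‖₊ ∂P
      ≤ ∑' x : ↥(Nset P),
          ∫⁻ ω, ENNReal.ofReal (ω.w 0 (x : V d) * rnorm (u ω (x : V d))) * ENNReal.ofReal C ∂P :=
          ENNReal.tsum_le_tsum hb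
    _ = (∑' x : ↥(Nset P),
          ∫⁻ ω, ENNReal.ofReal (ω.w 0 (x : V d) * rnorm (u ω (x : V d))) ∂P) * ENNReal.ofReal C := by
        rw [← ENNReal.tsum_mul_right]
        congr 1; funext x
        rw [lintegral_mul_const]
        exact ENNReal.measurable_ofReal.comp
          ((measurable_w 0 (x : V d)).mul (measurable_rnorm (hu.1 (x : V d))))
    _ = (∫⁻ ω, Wfull P u ω ∂P) * ENNReal.ofReal C := by
        congr 1
        have hmm : ∀ x : ↥(Nset P), AEMeasurable
            (fun ω : Cfg d => ENNReal.ofReal (ω.w 0 (x : V d) * rnorm (u ω (x : V d)))) P :=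
          fun x => (ENNReal.measurable_ofReal.comp
            ((measurable_w 0 (x : V d)).mul (measurable_rnorm (hu.1 (x : V d))))).aemeasurable
        rw [← lintegral_tsum hmm]
        rfl
  exact ne_of_lt (lt_of_le_of_lt hbig
      (ENNReal.mul_lt_top (lintegral_Wfull_lt_top hP hu) ENNReal.ofReal_lt_top))

/-- The negation equivalence of `N`. -/
def negN (hP : UsualConds P) : ↥(Nset P) ≃ ↥(Nset P) where
  toFun x := ⟨-(x : V d), neg_mem_Nset hP x.2⟩
  invFun x := ⟨-(x : V d), neg_mem_Nset hP x.2⟩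
  left_inv x := Subtype.ext (neg_neg _)
  right_inv x := Subtype.ext (neg_neg _)

theorem integral_SdotPhi_eq (hP : UsualConds P) (hu : MemL2cov P u)
    {φ : Cfg d → Fin d → ℝ} (hφm : Measurable φ) {C : ℝ} (hC : ∀ ω, rnorm (φ ω) ≤ C) :
    ∫ ω, (∑' x : ↥(Nset P), ω.w 0 (x : V d) * ∑ i, u ω (x : V d) i * φ ω i) ∂P =
      ∫ ω, (∑ i, Sfun P u ω i * φ ω i) ∂P := by
  refine integral_congr_ae ?_
  filter_upwards [ae_Wfull_ne_top hP hu] with ω hW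
  exact tsum_wdot_eq hW (φ ω)

theorem iprod_grad (hP : UsualConds P) (hu : MemL2cov P u)
    {φ : Cfg d → Fin d → ℝ} (hφm : Measurable φ) {C : ℝ} (hC0 : 0 ≤ C)
    (hC : ∀ ω, rnorm (φ ω) ≤ C) :
    iprodN P u (grad φ) = -2 * ∫ ω, (∑ i, Sfun P u ω i * φ ω i) ∂P := by
  classical
  set a : ↥(Nset P) → Cfg d → ℝ := fun x ω =>
    ω.w 0 (x : V d) * ∑ i, u ω (x : V d) i * φ (shiftC (x : V d) ω) i with ha
  set b : ↥(Nset P) → Cfg d → ℝ := fun x ω =>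
    ω.w 0 (x : V d) * ∑ i, u ω (x : V d) i * φ ω i with hb
  have hma : ∀ x : ↥(Nset P), Measurable fun ω => φ (shiftC (x : V d) ω) := fun x =>
    hφm.comp (measurable_shiftC _)
  have hmb : ∀ x : ↥(Nset P), Measurable fun ω => φ ω := fun _ => hφm
  have hCa : ∀ (x : ↥(Nset P)) ω, rnorm (φ (shiftC (x : V d) ω)) ≤ C := fun x ω => hC _
  have hCb : ∀ (x : ↥(Nset P)) ω, rnorm (φ ω) ≤ C := fun _ ω => hC ω
  -- step 1: split the integrand
  have hsplit : iprodN P u (grad φ) =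
      (∫ ω, (∑' x, a x ω) ∂P) - ∫ ω, (∑' x, b x ω) ∂P := by
    have h1 : iprodN P u (grad φ) = ∫ ω, ((∑' x, a x ω) - ∑' x, b x ω) ∂P := by
      rw [iprodN]
      refine integral_congr_ae ?_
      filter_upwards [ae_Wfull_ne_top hP hu] with ω hW
      have : ∀ x : ↥(Nset P),
          ω.w 0 (x : V d) * ∑ i, u ω (x : V d) i * grad φ ω (x : V d) i =
            a x ω - b x ω := by
        intro x
        rw [ha, hb]
        simp only [grad, Pi.sub_apply]
        rw [← mul_sub, ← Finset.sum_sub_distrib]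
        congr 1
        exact Finset.sum_congr rfl fun i _ => by ring
      rw [tsum_congr this,
        Summable.tsum_sub (summable_wdot hW _ (fun x => hCa x ω)) (summable_wdot hW _ (fun x => hCb x ω))]
    rw [h1]
    exact integral_sub (integrable_tsum_wdot hP hu hma hCa) (integrable_tsum_wdot hP hu hmb hCb)
  -- step 2: change of variables in the `a`-term
  have hshift : ∀ x : ↥(Nset P), ∫ ω, a x ω ∂P = - ∫ ω, b (negN hP x) ω ∂P := by
    intro x
    have key : ∀ ω, a x (shiftC (-(x : V d)) ω) = - b (negN hP x) ω := by
      intro ω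
      rw [ha, hb]
      simp only [negN, Equiv.coe_fn_mk]
      have h1 : (shiftC (-(x : V d)) ω).w 0 (x : V d) = ω.w 0 (-(x : V d)) := by
        rw [shiftC_w, zero_add, add_neg_cancel, ω.symm]
      have h2 : u (shiftC (-(x : V d)) ω) (x : V d) = - u ω (-(x : V d)) := by
        have := u_shift_neg hP hu (neg_mem_Nset hP x.2) ω
        rwa [neg_neg] at this
      have h3 : shiftC (x : V d) (shiftC (-(x : V d)) ω) = ω := by
        rw [shiftC_shiftC, neg_add_cancel, shiftC_zero]
      rw [h1, h2, h3]
      have h4 : ∑ i, (-u ω (-(x : V d))) i * φ ω i =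
          -(∑ i, u ω (-(x : V d)) i * φ ω i) := by
        rw [← Finset.sum_neg_distrib]
        exact Finset.sum_congr rfl fun i _ => by simp [Pi.neg_apply]
      rw [h4, mul_neg]
    calc ∫ ω, a x ω ∂P = ∫ ω, a x (shiftC (-(x : V d)) ω) ∂P :=
          (integral_shift hP (-(x : V d)) (a x)).symm
      _ = ∫ ω, - b (negN hP x) ω ∂P := by rw [show (fun ω => a x (shiftC (-(x : V d)) ω))
            = fun ω => - b (negN hP x) ω from funext key]
      _ = - ∫ ω, b (negN hP x) ω ∂P := integral_neg _
  -- step 3: put things together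
  have h2 : ∫ ω, (∑' x, a x ω) ∂P = - ∫ ω, (∑' x, b x ω) ∂P := by
    rw [integral_tsum_wdot_comm hP hu hma hC0 hCa,
      integral_tsum_wdot_comm hP hu hmb hC0 hCb]
    rw [tsum_congr hshift, tsum_neg]
    congr 1
    exact (negN hP).tsum_eq fun x => ∫ ω, b x ω ∂P
  rw [hsplit, h2, integral_SdotPhi_eq hP hu hφm hC]
  ring

/-! ### Square energies and bilinearity of the inner product -/

variable (P) in
/-- `W2(ω) = ∑_{x∈N} ω_{0x}|v(ω,x)|²`. -/
def W2 (v : Cfg d → V d → Fin d → ℝ) (ω : Cfg d) : ℝ≥0∞ :=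
  ∑' x : ↥(Nset P), ENNReal.ofReal (ω.w 0 (x : V d) * rnorm (v ω (x : V d)) ^ 2)

theorem energyN_eq_lintegral_W2 (v : Cfg d → V d → Fin d → ℝ) :
    energyN P v = ∫⁻ ω, W2 P v ω ∂P := rfl

theorem measurable_W2 {v : Cfg d → V d → Fin d → ℝ}
    (hvm : ∀ x, Measurable fun ω => v ω x) : Measurable (W2 P v) :=
  Measurable.ennreal_tsum fun x => ENNReal.measurable_ofReal.comp
    ((measurable_w 0 (x : V d)).mul ((measurable_rnorm (hvm (x : V d))).pow_const 2))

theorem ae_W2_ne_top {v : Cfg d → V d → Fin d → ℝ}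
    (hvm : ∀ x, Measurable fun ω => v ω x) (hE : energyN P v < ⊤) :
    ∀ᵐ ω ∂P, W2 P v ω ≠ ⊤ := by
  rw [energyN_eq_lintegral_W2] at hE
  filter_upwards [ae_lt_top (measurable_W2 hvm) hE.ne] with ω h using h.ne

theorem summable_of_tsum_ofReal_ne_top {ι : Type*} [Countable ι] {f : ι → ℝ}
    (h0 : ∀ x, 0 ≤ f x) (h : (∑' x, ENNReal.ofReal (f x)) ≠ ⊤) : Summable f := by
  rw [summable_iff_nnorm_tsum_ne_top]
  have : ∀ x, (‖f x‖₊ : ℝ≥0∞) = ENNReal.ofReal (f x) := fun x =>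
    Real.enorm_eq_ofReal (h0 x)
  rw [tsum_congr this]; exact h

theorem tsum_toReal_of_nonneg {ι : Type*} [Countable ι] {f : ι → ℝ}
    (h0 : ∀ x, 0 ≤ f x) (hs : Summable f) :
    ∑' x, f x = (∑' x, ENNReal.ofReal (f x)).toReal := by
  rw [← ENNReal.ofReal_tsum_of_nonneg h0 hs, ENNReal.toReal_ofReal (tsum_nonneg h0)]

theorem summable_w_rnorm_sq {v : Cfg d → V d → Fin d → ℝ} {ω : Cfg d}
    (hW : W2 P v ω ≠ ⊤) :
    Summable fun x : ↥(Nset P) => ω.w 0 (x : V d) * rnorm (v ω (x : V d)) ^ 2 :=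
  summable_of_tsum_ofReal_ne_top (fun x => mul_nonneg (ω.nonneg _ _) (sq_nonneg _)) hW

theorem abs_term_le {v : Cfg d → V d → Fin d → ℝ} (ω : Cfg d) (x : ↥(Nset P)) :
    |ω.w 0 (x : V d) * ∑ i, u ω (x : V d) i * v ω (x : V d) i| ≤
      (ω.w 0 (x : V d) * rnorm (u ω (x : V d)) ^ 2 +
        ω.w 0 (x : V d) * rnorm (v ω (x : V d)) ^ 2) / 2 := by
  have hw := ω.nonneg 0 (x : V d)
  have h1 : |∑ i, u ω (x : V d) i * v ω (x : V d) i| ≤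
      rnorm (u ω (x : V d)) * rnorm (v ω (x : V d)) := abs_dot_le _ _
  have h2 := rnorm_nonneg (u ω (x : V d))
  have h3 := rnorm_nonneg (v ω (x : V d))
  rw [abs_mul, abs_of_nonneg hw]
  nlinarith [sq_nonneg (rnorm (u ω (x : V d)) - rnorm (v ω (x : V d))),
    mul_le_mul_of_nonneg_left h1 hw]

theorem summable_term {v : Cfg d → V d → Fin d → ℝ} {ω : Cfg d}
    (hWu : W2 P u ω ≠ ⊤) (hWv : W2 P v ω ≠ ⊤) :
    Summable fun x : ↥(Nset P) =>
      ω.w 0 (x : V d) * ∑ i, u ω (x : V d) i * v ω (x : V d) i :=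
  summable_of_abs_le (((summable_w_rnorm_sq hWu).add (summable_w_rnorm_sq hWv)).div_const 2)
    (fun x => abs_term_le ω x)

theorem integrable_W2_toReal {v : Cfg d → V d → Fin d → ℝ}
    (hvm : ∀ x, Measurable fun ω => v ω x) (hE : energyN P v < ⊤) :
    Integrable (fun ω => (W2 P v ω).toReal) P :=
  integrable_toReal_of_lintegral_ne_top (measurable_W2 hvm).aemeasurable
    (by rw [← energyN_eq_lintegral_W2]; exact hE.ne)

theorem measurable_iprodN_integrand (hu : MemL2cov P u) {v : Cfg d → V d → Fin d → ℝ}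
    (hvm : ∀ x, Measurable fun ω => v ω x) :
    Measurable fun ω => ∑' x : ↥(Nset P),
      ω.w 0 (x : V d) * ∑ i, u ω (x : V d) i * v ω (x : V d) i :=
  measurable_tsum_real fun x => (measurable_w 0 (x : V d)).mul
    (Finset.measurable_sum _ fun i _ =>
      ((measurable_pi_apply i).comp (hu.1 (x : V d))).mul
        ((measurable_pi_apply i).comp (hvm (x : V d))))

theorem integrable_iprodN_integrand (hu : MemL2cov P u) {v : Cfg d → V d → Fin d → ℝ}
    (hvm : ∀ x, Measurable fun ω => v ω x) (hE : energyN P v < ⊤) :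
    Integrable (fun ω => ∑' x : ↥(Nset P),
      ω.w 0 (x : V d) * ∑ i, u ω (x : V d) i * v ω (x : V d) i) P := by
  refine Integrable.mono'
    (((integrable_W2_toReal hu.1 hu.2.2.2).add (integrable_W2_toReal hvm hE)).div_const 2)
    (measurable_iprodN_integrand hu hvm).aestronglyMeasurable ?_
  filter_upwards [ae_W2_ne_top hu.1 hu.2.2.2, ae_W2_ne_top hvm hE] with ω hWu hWv
  rw [Real.norm_eq_abs]
  calc |∑' x : ↥(Nset P), ω.w 0 (x : V d) * ∑ i, u ω (x : V d) i * v ω (x : V d) i|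
      ≤ ∑' x : ↥(Nset P), (ω.w 0 (x : V d) * rnorm (u ω (x : V d)) ^ 2 +
          ω.w 0 (x : V d) * rnorm (v ω (x : V d)) ^ 2) / 2 :=
        abs_tsum_le (fun x => abs_term_le ω x)
          (((summable_w_rnorm_sq hWu).add (summable_w_rnorm_sq hWv)).div_const 2)
    _ = ((W2 P u ω).toReal + (W2 P v ω).toReal) / 2 := by
        rw [tsum_div_const, Summable.tsum_add (summable_w_rnorm_sq hWu) (summable_w_rnorm_sq hWv),
          tsum_toReal_of_nonneg (fun x => mul_nonneg (ω.nonneg _ _) (sq_nonneg _))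
            (summable_w_rnorm_sq hWu),
          tsum_toReal_of_nonneg (fun x => mul_nonneg (ω.nonneg _ _) (sq_nonneg _))
            (summable_w_rnorm_sq hWv)]
        rfl

theorem iprod_add (hP : UsualConds P) (hu : MemL2cov P u)
    {a b : Cfg d → V d → Fin d → ℝ}
    (ham : ∀ x, Measurable fun ω => a ω x) (hbm : ∀ x, Measurable fun ω => b ω x)
    (hEa : energyN P a < ⊤) (hEb : energyN P b < ⊤) :
    iprodN P u (fun ω x => a ω x + b ω x) = iprodN P u a + iprodN P u b := by
  rw [iprodN, iprodN, iprodN]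
  rw [← integral_add (integrable_iprodN_integrand hu ham hEa)
    (integrable_iprodN_integrand hu hbm hEb)]
  refine integral_congr_ae ?_
  filter_upwards [ae_W2_ne_top hu.1 hu.2.2.2, ae_W2_ne_top ham hEa, ae_W2_ne_top hbm hEb]
    with ω hWu hWa hWb
  have h1 : ∀ x : ↥(Nset P),
      ω.w 0 (x : V d) * ∑ i, u ω (x : V d) i * (a ω (x : V d) + b ω (x : V d)) i =
        ω.w 0 (x : V d) * ∑ i, u ω (x : V d) i * a ω (x : V d) i +
          ω.w 0 (x : V d) * ∑ i, u ω (x : V d) i * b ω (x : V d) i := by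
    intro x
    rw [← mul_add, ← Finset.sum_add_distrib]
    congr 1
    refine Finset.sum_congr rfl fun i _ => ?_
    simp only [Pi.add_apply]; ring
  rw [tsum_congr h1, Summable.tsum_add (summable_term hWu hWa) (summable_term hWu hWb)]

theorem iprod_ennnorm_le (hu : MemL2cov P u) {v : Cfg d → V d → Fin d → ℝ}
    (hvm : ∀ x, Measurable fun ω => v ω x) {t : ℝ} (ht : 0 < t) :
    (2 : ℝ≥0∞) * ‖iprodN P u v‖₊ ≤
      ENNReal.ofReal t * energyN P u + ENNReal.ofReal t⁻¹ * energyN P v := by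
  have hpoint : ∀ ω : Cfg d,
      (2 : ℝ≥0∞) * ‖∑' x : ↥(Nset P),
          ω.w 0 (x : V d) * ∑ i, u ω (x : V d) i * v ω (x : V d) i‖₊ ≤
        ENNReal.ofReal t * W2 P u ω + ENNReal.ofReal t⁻¹ * W2 P v ω := by
    intro ω
    set c : ↥(Nset P) → ℝ := fun x =>
      ω.w 0 (x : V d) * ∑ i, u ω (x : V d) i * v ω (x : V d) i with hc
    have hterm : ∀ x : ↥(Nset P), (2 : ℝ≥0∞) * ENNReal.ofReal |c x| ≤
        ENNReal.ofReal t * ENNReal.ofReal (ω.w 0 (x : V d) * rnorm (u ω (x : V d)) ^ 2) +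
          ENNReal.ofReal t⁻¹ * ENNReal.ofReal (ω.w 0 (x : V d) * rnorm (v ω (x : V d)) ^ 2) := by
      intro x
      rw [← ENNReal.ofReal_ofNat, ← ENNReal.ofReal_mul (by norm_num),
        ← ENNReal.ofReal_mul ht.le, ← ENNReal.ofReal_mul (inv_pos.mpr ht).le]
      refine le_trans (ENNReal.ofReal_le_ofReal ?_) ENNReal.ofReal_add_le
      have hw := ω.nonneg 0 (x : V d)
      have hru := rnorm_nonneg (u ω (x : V d))
      have hrv := rnorm_nonneg (v ω (x : V d))
      have hcs : |c x| ≤ ω.w 0 (x : V d) * (rnorm (u ω (x : V d)) * rnorm (v ω (x : V d))) := by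
        rw [hc, abs_mul, abs_of_nonneg hw]
        exact mul_le_mul_of_nonneg_left (abs_dot_le _ _) hw
      set A := rnorm (u ω (x : V d)) with hA
      set B := rnorm (v ω (x : V d)) with hB
      have hamgm : 2 * (A * B) ≤ t * A ^ 2 + t⁻¹ * B ^ 2 := by
        have hkey : t⁻¹ * (t * A - B) ^ 2 = t * A ^ 2 - 2 * (A * B) + t⁻¹ * B ^ 2 := by
          field_simp
          ring
        have hpos := mul_nonneg (inv_pos.mpr ht).le (sq_nonneg (t * A - B))
        linarith [hkey ▸ hpos]
      calc 2 * |c x| ≤ 2 * (ω.w 0 (x : V d) * (A * B)) := by linarith [hcs]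
        _ = ω.w 0 (x : V d) * (2 * (A * B)) := by ring
        _ ≤ ω.w 0 (x : V d) * (t * A ^ 2 + t⁻¹ * B ^ 2) :=
            mul_le_mul_of_nonneg_left hamgm hw
        _ = t * (ω.w 0 (x : V d) * A ^ 2) + t⁻¹ * (ω.w 0 (x : V d) * B ^ 2) := by ring
    calc (2 : ℝ≥0∞) * ‖∑' x, c x‖₊ ≤ (2 : ℝ≥0∞) * ∑' x, ENNReal.ofReal |c x| := by
          refine mul_le_mul_right ?_ _
          by_cases hs : Summable c
          · rw [← enorm_eq_nnnorm, Real.enorm_eq_ofReal_abs]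
            have habs : Summable fun x => |c x| := summable_abs_iff.mpr hs
            refine le_trans (ENNReal.ofReal_le_ofReal (abs_tsum_le (fun x => le_refl _) habs)) ?_
            rw [ENNReal.ofReal_tsum_of_nonneg (fun x => abs_nonneg _) habs]
          · rw [tsum_eq_zero_of_not_summable hs]
            simp
      _ = ∑' x, (2 : ℝ≥0∞) * ENNReal.ofReal |c x| := ENNReal.tsum_mul_left.symm
      _ ≤ ∑' x : ↥(Nset P),
            (ENNReal.ofReal t * ENNReal.ofReal (ω.w 0 (x : V d) * rnorm (u ω (x : V d)) ^ 2) +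
             ENNReal.ofReal t⁻¹ * ENNReal.ofReal (ω.w 0 (x : V d) * rnorm (v ω (x : V d)) ^ 2)) :=
          ENNReal.tsum_le_tsum hterm
      _ = ENNReal.ofReal t * W2 P u ω + ENNReal.ofReal t⁻¹ * W2 P v ω := by
          rw [ENNReal.tsum_add, ENNReal.tsum_mul_left, ENNReal.tsum_mul_left]
          rfl
  calc (2 : ℝ≥0∞) * ‖iprodN P u v‖₊
      ≤ (2 : ℝ≥0∞) * ∫⁻ ω, ‖∑' x : ↥(Nset P),
          ω.w 0 (x : V d) * ∑ i, u ω (x : V d) i * v ω (x : V d) i‖₊ ∂P :=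
        mul_le_mul_right (enorm_integral_le_lintegral_enorm _) _
    _ = ∫⁻ ω, (2 : ℝ≥0∞) * ‖∑' x : ↥(Nset P),
          ω.w 0 (x : V d) * ∑ i, u ω (x : V d) i * v ω (x : V d) i‖₊ ∂P :=
        (lintegral_const_mul' _ _ (by norm_num)).symm
    _ ≤ ∫⁻ ω, (ENNReal.ofReal t * W2 P u ω + ENNReal.ofReal t⁻¹ * W2 P v ω) ∂P :=
        lintegral_mono hpoint
    _ = ENNReal.ofReal t * energyN P u + ENNReal.ofReal t⁻¹ * energyN P v := by
        rw [lintegral_add_left (by exact (measurable_W2 hu.1).const_mul _),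
          lintegral_const_mul _ (measurable_W2 hu.1),
          lintegral_const_mul _ (measurable_W2 hvm)]
        rfl

/-! ### The reverse direction -/

theorem Sfun_ae_zero_of_divN (hP : UsualConds P) (hu : MemL2cov P u)
    (hdiv : ∀ᵐ ω ∂P, divN P u ω = 0) : ∀ᵐ ω ∂P, Sfun P u ω = 0 := by
  filter_upwards [hdiv] with ω h
  rw [divN_eq_two_smul hP hu] at h
  rcases smul_eq_zero.mp h with h2 | h0
  · norm_num at h2
  · exact h0

theorem integral_SdotPhi_zero (hP : UsualConds P) (hu : MemL2cov P u)
    (hS : ∀ᵐ ω ∂P, Sfun P u ω = 0) (φ : Cfg d → Fin d → ℝ) :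
    ∫ ω, (∑ i, Sfun P u ω i * φ ω i) ∂P = 0 := by
  rw [show (0:ℝ) = ∫ (_ : Cfg d), (0:ℝ) ∂P by rw [integral_zero]]
  refine integral_congr_ae ?_
  filter_upwards [hS] with ω h
  rw [h]
  simp

theorem iprod_grad_zero (hP : UsualConds P) (hu : MemL2cov P u)
    (hS : ∀ᵐ ω ∂P, Sfun P u ω = 0) {φ : Cfg d → Fin d → ℝ} (hφ : IsLocal φ) :
    iprodN P u (grad φ) = 0 := by
  obtain ⟨C, hC0, hC⟩ := hφ.bound
  rw [iprod_grad hP hu hφ.measurable' hC0 hC, integral_SdotPhi_zero hP hu hS φ]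
  ring

theorem backward_dir (hP : UsualConds P) (hu : MemL2cov P u)
    (hdiv : ∀ᵐ ω ∂P, divN P u ω = 0) :
    ∀ v, InGradClosure P v → iprodN P u v = 0 := by
  have hS := Sfun_ae_zero_of_divN hP hu hdiv
  rintro v ⟨hv, φs, hlocs, htend⟩
  have hEu : energyN P u < ⊤ := hu.2.2.2
  have key : ∀ ε : ℝ, 0 < ε →
      2 * |iprodN P u v| ≤ ε * ((energyN P u).toReal + 1) := by
    intro ε hε
    have hpos : (0 : ℝ≥0∞) < ENNReal.ofReal (ε * ε) := by
      rw [ENNReal.ofReal_pos]; positivity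
    obtain ⟨n, hn⟩ := (htend.eventually_lt_const hpos).exists
    set g := grad (φs n) with hg
    set a : Cfg d → V d → Fin d → ℝ := fun ω x => v ω x - g ω x with haa
    have hEb : energyN P g < ⊤ := (memL2cov_grad hP (hlocs n)).2.2.2
    have hEa : energyN P a < ⊤ := lt_trans hn ENNReal.ofReal_lt_top
    have ham : ∀ x, Measurable fun ω => a ω x := fun x =>
      (hv.1 x).sub (measurable_grad (hlocs n).measurable' x)
    have hbm : ∀ x, Measurable fun ω => g ω x := measurable_grad (hlocs n).measurable'
    have hsplit : iprodN P u v = iprodN P u a + iprodN P u g := by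
      rw [show iprodN P u v = iprodN P u (fun ω x => a ω x + g ω x) by
        congr 1; funext ω x; rw [haa]; simp]
      exact iprod_add hP hu ham hbm hEa hEb
    have hzero : iprodN P u g = 0 := iprod_grad_zero hP hu hS (hlocs n)
    have hva : iprodN P u v = iprodN P u a := by rw [hsplit, hzero, add_zero]
    have hbound := iprod_ennnorm_le hu ham hε
    have hb2 : (2 : ℝ≥0∞) * ‖iprodN P u a‖₊ ≤
        ENNReal.ofReal ε * (energyN P u + 1) := by
      calc (2 : ℝ≥0∞) * ‖iprodN P u a‖₊
          ≤ ENNReal.ofReal ε * energyN P u + ENNReal.ofReal ε⁻¹ * energyN P a :=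
            hbound
        _ ≤ ENNReal.ofReal ε * energyN P u + ENNReal.ofReal ε⁻¹ * ENNReal.ofReal (ε * ε) :=
            add_le_add_right (mul_le_mul_right hn.le _) _
        _ = ENNReal.ofReal ε * energyN P u + ENNReal.ofReal ε := by
            rw [← ENNReal.ofReal_mul (inv_pos.mpr hε).le]
            congr 2
            field_simp
        _ = ENNReal.ofReal ε * (energyN P u + 1) := by rw [mul_add, mul_one]
    have hrhs_ne : ENNReal.ofReal ε * (energyN P u + 1) ≠ ⊤ :=
      ENNReal.mul_ne_top ENNReal.ofReal_ne_top
        (ENNReal.add_ne_top.mpr ⟨hEu.ne, ENNReal.one_ne_top⟩)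
    have := ENNReal.toReal_mono hrhs_ne hb2
    rw [ENNReal.toReal_mul, ENNReal.toReal_mul, ENNReal.toReal_ofNat,
      ENNReal.coe_toReal, coe_nnnorm, Real.norm_eq_abs, ENNReal.toReal_ofReal hε.le,
      ENNReal.toReal_add hEu.ne ENNReal.one_ne_top, ENNReal.toReal_one] at this
    rw [hva]
    exact this
  have habs : |iprodN P u v| = 0 := by
    by_contra hne
    have hpos : 0 < |iprodN P u v| := lt_of_le_of_ne (abs_nonneg _) (Ne.symm hne)
    have hK : 0 < (energyN P u).toReal + 1 := by positivity
    have := key (|iprodN P u v| / ((energyN P u).toReal + 1)) (by positivity)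
    rw [div_mul_cancel₀ _ hK.ne'] at this
    linarith
  exact abs_eq_zero.mp habs

/-! ### The forward direction: density argument -/

variable (d) in
/-- The configuration as a point of the product space `ℝ^{E(ℤ^d)}`. -/
def T (ω : Cfg d) : (V d × V d) → ℝ := fun e => ω.w e.1 e.2

theorem measurable_T : Measurable (T d : Cfg d → (V d × V d) → ℝ) :=
  measurable_pi_lambda _ fun e => measurable_w e.1 e.2

theorem exists_preimage_T {A : Set (Cfg d)} (hA : MeasurableSet A) :
    ∃ B : Set ((V d × V d) → ℝ), MeasurableSet B ∧ A = T d ⁻¹' B := by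
  have h : MeasurableSet[MeasurableSpace.comap Cfg.w inferInstance] A := hA
  rw [MeasurableSpace.measurableSet_comap] at h
  obtain ⟨B', hB', hBA⟩ := h
  refine ⟨(fun f : (V d × V d) → ℝ => fun a b => f (a, b)) ⁻¹' B', ?_, ?_⟩
  · exact (measurable_pi_lambda _ fun a => measurable_pi_lambda _ fun b =>
      measurable_pi_apply (a, b)) hB'
  · rw [← hBA]
    rfl

theorem integral_S_mul_local (hP : UsualConds P) (hu : MemL2cov P u)
    (H : ∀ v, InGradClosure P v → iprodN P u v = 0)
    (i : Fin d) (E : Finset (V d × V d)) (g : ((V d × V d) → ℝ) → ℝ)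
    (hg : Continuous g) (C : ℝ) (hgb : ∀ f, |g f| ≤ C) :
    ∫ ω, Sfun P u ω i * g (fun e => if e ∈ E then ω.w e.1 e.2 else 0) ∂P = 0 := by
  classical
  set h : Cfg d → ℝ := fun ω => g (fun e => if e ∈ E then ω.w e.1 e.2 else 0) with hh
  set φ : Cfg d → Fin d → ℝ := fun ω j => if j = i then h ω else 0 with hφ
  have hsumsq : ∀ ω, ∑ j, (φ ω j) ^ 2 = (h ω) ^ 2 := by
    intro ω
    calc ∑ j, (φ ω j) ^ 2 = ∑ j, if j = i then (h ω) ^ 2 else 0 := by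
          refine Finset.sum_congr rfl fun j _ => ?_
          by_cases hj : j = i <;> simp [hφ, hj]
      _ = (h ω) ^ 2 := by simp
  have hloc : IsLocal φ := by
    constructor
    · refine ⟨C, fun ω => ?_⟩
      rw [rnorm, hsumsq, Real.sqrt_sq_eq_abs]
      exact hgb _
    · refine ⟨E, fun f => fun j => if j = i then g f else 0, ?_, fun ω => rfl⟩
      refine continuous_pi fun j => ?_
      by_cases hj : j = i
      · simpa [hj] using hg
      · simp only [hj, if_false]
        exact continuous_const
  have h1 := H (grad φ) (inGradClosure_grad hP hloc)
  obtain ⟨C', hC0', hC'⟩ := hloc.bound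
  rw [iprod_grad hP hu hloc.measurable' hC0' hC'] at h1
  have h2 : ∫ ω, (∑ j, Sfun P u ω j * φ ω j) ∂P = 0 := by linarith
  have hfun : ∀ ω : Cfg d, Sfun P u ω i * h ω = ∑ j, Sfun P u ω j * φ ω j := by
    intro ω
    calc Sfun P u ω i * h ω = ∑ j, if j = i then Sfun P u ω j * h ω else 0 := by simp
      _ = ∑ j, Sfun P u ω j * φ ω j := by
          refine Finset.sum_congr rfl fun j _ => ?_
          by_cases hj : j = i <;> simp [hφ, hj]
  exact (integral_congr_ae (Eventually.of_forall hfun)).trans h2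

theorem integrable_Sfun_i (hP : UsualConds P) (hu : MemL2cov P u) (i : Fin d) :
    Integrable (fun ω => Sfun P u ω i) P := by
  refine Integrable.mono' (integrable_Mw hP hu)
    ((measurable_pi_apply i).comp (measurable_Sfun hu)).aestronglyMeasurable ?_
  filter_upwards [ae_Wfull_ne_top hP hu] with ω hW
  rw [Real.norm_eq_abs, Sfun, tsum_apply (summable_smul_of hW)]
  calc |∑' x : ↥(Nset P), (ω.w 0 (x : V d) • u ω (x : V d)) i|
      ≤ ∑' x : ↥(Nset P), ω.w 0 (x : V d) * rnorm (u ω (x : V d)) := by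
        refine abs_tsum_le (fun x => ?_) (summable_w_rnorm_of hW)
        rw [Pi.smul_apply, smul_eq_mul, abs_mul, abs_of_nonneg (ω.nonneg _ _)]
        exact mul_le_mul_of_nonneg_left (apply_le_rnorm _ i) (ω.nonneg _ _)
    _ = Mw P u ω := tsum_w_rnorm_eq hW

theorem inner_cyl (hP : UsualConds P) (hu : MemL2cov P u)
    (H : ∀ v, InGradClosure P v → iprodN P u v = 0) (i : Fin d)
    (E : Finset (V d × V d)) :
    ∀ S : Set (∀ _ : E, ℝ), MeasurableSet S →
      ∫ ω in T d ⁻¹' (cylinder E S), Sfun P u ω i ∂P = 0 := by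
  classical
  haveI := hP.prob
  set F : Cfg d → ℝ := fun ω => Sfun P u ω i with hF
  have hFi : Integrable F P := integrable_Sfun_i hP hu i
  have hFm : Measurable F := (measurable_pi_apply i).comp (measurable_Sfun hu)
  have h_eq : (inferInstance : MeasurableSpace (∀ _ : E, ℝ)) =
      MeasurableSpace.generateFrom {s : Set (∀ _ : E, ℝ) | IsClosed s} := by
    rw [BorelSpace.measurable_eq (α := ∀ _ : E, ℝ)]
    exact borel_eq_generateFrom_isClosed
  have h_inter : IsPiSystem {s : Set (∀ _ : E, ℝ) | IsClosed s} :=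
    fun s hs t ht _ => hs.inter ht
  refine MeasurableSpace.induction_on_inter h_eq h_inter ?_ ?_ ?_ ?_
  · simp [cylinder]
  · -- closed sets: dominated convergence with thickened indicators
    intro S hS
    replace hS : IsClosed S := hS
    set R : Cfg d → (∀ _ : E, ℝ) := fun ω => fun e => ω.w (e : V d × V d).1 (e : V d × V d).2
      with hR
    have hRm : Measurable R := measurable_pi_lambda _ fun e =>
      measurable_w (e : V d × V d).1 (e : V d × V d).2
    have hmem : ∀ ω, ω ∈ T d ⁻¹' (cylinder E S) ↔ R ω ∈ S := by
      intro ω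
      rw [Set.mem_preimage, mem_cylinder]
      rfl
    have hδpos : ∀ n : ℕ, 0 < (1 : ℝ) / (n + 1) := fun n => by positivity
    set gseq : ℕ → Cfg d → ℝ := fun n ω =>
      ((thickenedIndicator (hδpos n) S (R ω) : ℝ≥0) : ℝ) with hgseq
    have hzero : ∀ n, ∫ ω, F ω * gseq n ω ∂P = 0 := by
      intro n
      have hb := integral_S_mul_local hP hu H i E
        (fun f => ((thickenedIndicator (hδpos n) S (fun e : E => f (e : V d × V d)) : ℝ≥0) : ℝ))
        (by
          refine NNReal.continuous_coe.comp ?_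
          exact (thickenedIndicator (hδpos n) S).continuous.comp
            (continuous_pi fun e => continuous_apply ((e : V d × V d))))
        1 (fun f => by
          rw [abs_of_nonneg (by positivity)]
          exact_mod_cast thickenedIndicator_le_one (hδpos n) S _)
      have harg : ∀ ω : Cfg d,
          (fun e : E => if (e : V d × V d) ∈ E then ω.w (e : V d × V d).1 (e : V d × V d).2
            else 0) = R ω := by
        intro ω; funext e; simp [hR, e.2]
      have hfuneq : ∀ ω : Cfg d, F ω * gseq n ω = Sfun P u ω i *
          ((thickenedIndicator (hδpos n) S (fun e : E =>
            if (e : V d × V d) ∈ E then ω.w (e : V d × V d).1 (e : V d × V d).2 else 0)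
              : ℝ≥0) : ℝ) := by
        intro ω
        rw [harg ω]
      exact (integral_congr_ae (Eventually.of_forall hfuneq)).trans hb
    have htendsto : ∀ ω, Tendsto (fun n => F ω * gseq n ω) atTop
        (𝓝 (F ω * S.indicator (fun _ => (1:ℝ)) (R ω))) := by
      intro ω
      refine Tendsto.const_mul _ ?_
      have hkey := thickenedIndicator_tendsto_indicator_closure
        (δseq := fun n : ℕ => (1 : ℝ) / (n + 1)) hδpos
        tendsto_one_div_add_atTop_nhds_zero_nat S
      have hpt := (tendsto_pi_nhds.mp hkey) (R ω)
      have hco := (NNReal.continuous_coe.tendsto _).comp hpt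
      rw [hS.closure_eq] at hco
      convert hco using 2
      · rfl
      by_cases hy : R ω ∈ S <;> simp [Set.indicator_apply, hy]
    have hDCT := tendsto_integral_of_dominated_convergence (fun ω => |F ω|)
      (fun n => (hFm.mul ((NNReal.continuous_coe.measurable.comp
        (((thickenedIndicator (hδpos n) S).continuous.measurable).comp hRm)))).aestronglyMeasurable)
      hFi.abs
      (fun n => Eventually.of_forall fun ω => by
        rw [Real.norm_eq_abs]; show |F ω * gseq n ω| ≤ |F ω|; rw [abs_mul]
        have h1 : gseq n ω ≤ 1 := by
          rw [hgseq]
          exact_mod_cast thickenedIndicator_le_one (hδpos n) S (R ω)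
        have h2 : 0 ≤ gseq n ω := by rw [hgseq]; positivity
        calc |F ω| * |gseq n ω| ≤ |F ω| * 1 := by
              rw [abs_of_nonneg h2]
              exact mul_le_mul_of_nonneg_left h1 (abs_nonneg _)
          _ = |F ω| := mul_one _)
      (Eventually.of_forall htendsto)
    have hlim : ∫ ω, F ω * S.indicator (fun _ => (1:ℝ)) (R ω) ∂P = 0 := by
      have hconst : Tendsto (fun _ : ℕ => (0:ℝ)) atTop (𝓝 0) := tendsto_const_nhds
      have : Tendsto (fun n => ∫ ω, F ω * gseq n ω ∂P) atTop
          (𝓝 (∫ ω, F ω * S.indicator (fun _ => (1:ℝ)) (R ω) ∂P)) := hDCT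
      rw [show (fun n => ∫ ω, F ω * gseq n ω ∂P) = fun _ => (0:ℝ) from funext hzero] at this
      exact (tendsto_nhds_unique hconst this).symm
    have hmeas : MeasurableSet (T d ⁻¹' (cylinder E S)) :=
      measurable_T (hS.measurableSet.cylinder)
    rw [← integral_indicator hmeas]
    rw [← hlim]
    refine integral_congr_ae (Eventually.of_forall fun ω => ?_)
    by_cases hω : ω ∈ T d ⁻¹' (cylinder E S)
    · have hRS : R ω ∈ S := (hmem ω).mp hω
      simp [Set.indicator_of_mem hω, Set.indicator_of_mem hRS]; rfl
    · have hRS : R ω ∉ S := fun hc => hω ((hmem ω).mpr hc)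
      simp [Set.indicator_of_notMem hω, Set.indicator_of_notMem hRS]
  · -- complements
    intro S hSm hind
    have htot : ∫ ω, F ω ∂P = 0 := by
      have := integral_S_mul_local hP hu H i ∅ (fun _ => 1) continuous_const 1
        (fun f => by norm_num)
      simpa using this
    have hcompl : T d ⁻¹' (cylinder E Sᶜ) = (T d ⁻¹' (cylinder E S))ᶜ := by
      rw [← compl_cylinder, Set.preimage_compl]
    have hmeas : MeasurableSet (T d ⁻¹' (cylinder E S)) := measurable_T hSm.cylinder
    have hsum := integral_add_compl hmeas hFi
    rw [hcompl]
    rw [hind] at hsum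
    rw [htot] at hsum
    linarith
  · -- disjoint unions
    intro f hdisj hmeas hind
    have hpre : T d ⁻¹' (cylinder E (⋃ n, f n)) = ⋃ n, T d ⁻¹' (cylinder E (f n)) := by
      rw [show cylinder (α := fun _ : V d × V d => ℝ) E (⋃ n, f n)
          = ⋃ n, cylinder (α := fun _ : V d × V d => ℝ) E (f n) by
        simp only [cylinder, Set.preimage_iUnion], Set.preimage_iUnion]
    rw [hpre]
    rw [integral_iUnion (fun n => measurable_T (hmeas n).cylinder)
      (fun m n hmn => Disjoint.preimage _ (Disjoint.preimage _ (hdisj hmn)))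
      hFi.integrableOn]
    simp [hind]

theorem forward_Sfun (hP : UsualConds P) (hu : MemL2cov P u)
    (H : ∀ v, InGradClosure P v → iprodN P u v = 0) :
    ∀ᵐ ω ∂P, Sfun P u ω = 0 := by
  haveI := hP.prob
  have hcomp : ∀ i : Fin d, ∀ᵐ ω ∂P, Sfun P u ω i = 0 := by
    intro i
    have hsets : ∀ A : Set (Cfg d), MeasurableSet A →
        ∫ ω in A, Sfun P u ω i ∂P = 0 := by
      intro A hA
      obtain ⟨B, hB, rfl⟩ := exists_preimage_T hA
      have main : ∀ B : Set ((V d × V d) → ℝ), MeasurableSet B →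
          ∫ ω in T d ⁻¹' B, Sfun P u ω i ∂P = 0 := by
        have h_eq : (inferInstance : MeasurableSpace ((V d × V d) → ℝ)) =
            MeasurableSpace.generateFrom (measurableCylinders fun _ : V d × V d => ℝ) :=
          generateFrom_measurableCylinders.symm
        refine MeasurableSpace.induction_on_inter h_eq isPiSystem_measurableCylinders ?_ ?_ ?_ ?_
        · simp
        · intro t ht
          obtain ⟨E, S, hS, rfl⟩ := (mem_measurableCylinders t).mp ht
          exact inner_cyl hP hu H i E S hS
        · intro t htm hind
          have htot : ∫ ω, Sfun P u ω i ∂P = 0 := by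
            have := integral_S_mul_local hP hu H i ∅ (fun _ => 1) continuous_const 1
              (fun f => by norm_num)
            simpa using this
          have hsum := integral_add_compl (measurable_T htm) (integrable_Sfun_i hP hu i)
          rw [hind, htot] at hsum
          rw [Set.preimage_compl]
          linarith
        · intro f hdisj hmeas hind
          rw [Set.preimage_iUnion]
          rw [integral_iUnion (fun n => measurable_T (hmeas n))
            (fun m n hmn => Disjoint.preimage _ (hdisj hmn))
            (integrable_Sfun_i hP hu i).integrableOn]
          simp [hind]
      exact main B hB
    have := ae_eq_zero_of_forall_setIntegral_eq_of_sigmaFinite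
      (μ := P) (f := fun ω => Sfun P u ω i)
      (fun s hs _ => (integrable_Sfun_i hP hu i).integrableOn)
      (fun s hs _ => hsets s hs)
    filter_upwards [this] with ω hω using hω
  have hall := ae_all_iff.mpr hcomp
  filter_upwards [hall] with ω h
  funext i
  exact h i

/-! ### Part 2: harmonicity of the extension -/

theorem ae_shift_prop (hP : UsualConds P) (x : V d) {p : Cfg d → Prop}
    (hm : MeasurableSet {ω | p ω}) (h : ∀ᵐ ω ∂P, p ω) :
    ∀ᵐ ω ∂P, p (shiftC x ω) := by
  rw [ae_iff] at h ⊢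
  have heq : {ω : Cfg d | ¬ p (shiftC x ω)} = shiftC x ⁻¹' {ω | ¬ p ω} := rfl
  have hm' : MeasurableSet {ω : Cfg d | ¬ p ω} := hm.compl
  rw [heq, (hP.inv x).measure_preimage hm'.nullMeasurableSet]
  exact h

theorem ae_w_outside (hP : UsualConds P) :
    ∀ᵐ ω ∂P, ∀ x z : V d, z ∉ Nset P → ω.w x (x + z) = 0 := by
  rw [ae_all_iff]
  intro x
  rw [ae_all_iff]
  intro z
  by_cases hz : z ∈ Nset P
  · exact Eventually.of_forall fun ω h => absurd hz h
  · have hbase : ∀ᵐ ω ∂P, ω.w 0 z = 0 := by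
      have hmeas : P {ω : Cfg d | 0 < ω.w 0 z} = 0 := by
        rcases (lt_or_eq_of_le (zero_le' : 0 ≤ P {ω : Cfg d | 0 < ω.w 0 z})) with hlt | heq
        · exact absurd (Or.inl hlt) hz
        · exact heq.symm
      rw [ae_iff]
      convert hmeas using 2
      ext ω
      simp only [Set.mem_setOf_eq]
      constructor
      · intro hne
        exact lt_of_le_of_ne (ω.nonneg 0 z) (Ne.symm hne)
      · intro hlt
        exact ne_of_gt hlt
    have hm : MeasurableSet {ω : Cfg d | ω.w 0 z = 0} :=
      measurableSet_eq_fun (measurable_w 0 z) measurable_const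
    have := ae_shift_prop hP x (p := fun ω => ω.w 0 z = 0) hm hbase
    filter_upwards [this] with ω h _
    rw [shiftC_w, zero_add] at h
    rwa [add_comm z x] at h

theorem ae_shift_S (hP : UsualConds P) (hu : MemL2cov P u)
    (hS : ∀ᵐ ω ∂P, Sfun P u ω = 0) :
    ∀ᵐ ω ∂P, ∀ x : V d, Wfull P u (shiftC x ω) ≠ ⊤ ∧ Sfun P u (shiftC x ω) = 0 := by
  rw [ae_all_iff]
  intro x
  have hm : MeasurableSet {ω : Cfg d | Wfull P u ω ≠ ⊤ ∧ Sfun P u ω = 0} := by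
    refine MeasurableSet.inter ?_ ?_
    · exact ((measurable_Wfull hu) (measurableSet_singleton ⊤)).compl
    · exact measurableSet_eq_fun (measurable_Sfun hu) measurable_const
  have hae : ∀ᵐ ω ∂P, Wfull P u ω ≠ ⊤ ∧ Sfun P u ω = 0 :=
    (ae_Wfull_ne_top hP hu).and hS
  exact ae_shift_prop hP x (p := fun ω => Wfull P u ω ≠ ⊤ ∧ Sfun P u ω = 0) hm hae

theorem part2_harmonic (hP : UsualConds P) (hu : MemL2cov P u)
    (hS : ∀ᵐ ω ∂P, Sfun P u ω = 0)
    (U : Cfg d → V d → Fin d → ℝ)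
    (hU2 : ∀ ω x z, z ∈ Nset P → U ω (x + z) - U ω x = u (shiftC x ω) z) :
    ∀ᵐ ω ∂P, ∀ x : V d, (∑' y, ω.w x y • (U ω y - U ω x)) = 0 := by
  filter_upwards [ae_w_outside hP, ae_shift_S hP hu hS] with ω hout hpack
  intro x
  obtain ⟨hWx, hSx⟩ := hpack x
  have hsupp : Function.support (fun y => ω.w x y • (U ω y - U ω x)) ⊆
      {y : V d | y - x ∈ Nset P} := by
    intro y hy
    by_contra hyN
    apply hy
    have hw0 : ω.w x y = 0 := by
      have h := hout x (y - x) hyN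
      rwa [add_sub_cancel] at h
    simp [hw0]
  rw [← tsum_subtype_eq_of_support_subset hsupp]
  set s : Set (V d) := {y : V d | y - x ∈ Nset P} with hs
  set e : ↥(Nset P) ≃ ↥s :=
    { toFun := fun z => ⟨x + (z : V d), by simp [hs]⟩
      invFun := fun y => ⟨(y : V d) - x, y.2⟩
      left_inv := fun z => Subtype.ext (by simp)
      right_inv := fun y => Subtype.ext (by simp) } with he
  rw [← e.tsum_eq]
  have hterm : ∀ z : ↥(Nset P),
      ω.w x ((⟨x + (z : V d), by simp [hs]⟩ : ↥s) : V d) •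
        (U ω ((⟨x + (z : V d), by simp [hs]⟩ : ↥s) : V d) - U ω x) =
      (shiftC x ω).w 0 (z : V d) • u (shiftC x ω) (z : V d) := by
    intro z
    have hcoe : ((⟨x + (z : V d), by simp [hs]⟩ : ↥s) : V d) = x + (z : V d) := rfl
    rw [hcoe, hU2 ω x (z : V d) z.2]
    congr 1
    rw [shiftC_w, zero_add, add_comm]
  calc ∑' z : ↥(Nset P), (fun y : ↥s => ω.w x (y : V d) • (U ω (y : V d) - U ω x)) (e z)
      = ∑' z : ↥(Nset P), (shiftC x ω).w 0 (z : V d) • u (shiftC x ω) (z : V d) :=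
        tsum_congr hterm
    _ = Sfun P u (shiftC x ω) := rfl
    _ = 0 := hSx
/-- (Weyl decomposition / characterization of the orthogonal complement)
Suppose `ℙ` satisfies the "usual conditions".  For `u ∈ L²_cov`, `u` is orthogonal to
`L²_∇` if and only if `div(ωu) = 0` `ℙ`-almost surely.  In particular, if `N` generates
`ℤ^d` and `U` is the extension of `u` to `ℤ^d` (with `U(ω,0) = 0` and
`U(ω,x+z) − U(ω,x) = u(τ_xω,z)`), then `L_ω U(ω,·) = 0` everywhere, `ℙ`-a.s. -/
theorem statement5 {d : ℕ} (P : Measure (Cfg d)) (hP : UsualConds P)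
    (u : Cfg d → V d → Fin d → ℝ) (hu : MemL2cov P u) :
    ((∀ v, InGradClosure P v → iprodN P u v = 0) ↔ (∀ᵐ ω ∂P, divN P u ω = 0)) ∧
    ((∀ v, InGradClosure P v → iprodN P u v = 0) →
      AddSubgroup.closure (Nset P) = ⊤ →
      ∀ U : Cfg d → V d → Fin d → ℝ,
        (∀ ω, U ω 0 = 0) →
        (∀ ω x z, z ∈ Nset P → U ω (x + z) - U ω x = u (shiftC x ω) z) →
        ∀ᵐ ω ∂P, ∀ x : V d, (∑' y, ω.w x y • (U ω y - U ω x)) = 0) := by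
  constructor
  · constructor
    · intro H
      filter_upwards [forward_Sfun hP hu H] with ω h
      rw [divN_eq_two_smul hP hu, h, smul_zero]
    · exact backward_dir hP hu
  · intro H _ U _ hU2
    exact part2_harmonic hP hu (forward_Sfun hP hu H) U hU2

end RCM
end
end

section
/- Fix a configuration ω of conductances on ℤ^d with π* := sup_x π_ω(x) < ∞, and suppose the random walk (X_n) among conductances ω started at 0 satisfies a central limit theorem with non-degenerate limit: X_n/√n converges in distribution under P_ω^0 to a centered Gaussian vector on ℝ^d with non-degenerate covariance matrix. Then there is a constant c > 0 (depending only on d, the limiting covariance, and π*) such that for all sufficiently large n, P_ω^{2n}(0,0) ≥ c n^{−d/2} π_ω(0). -/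
open MeasureTheory Filter Topology Set
open scoped ENNReal NNReal

noncomputable section

namespace RCM

variable {d : ℕ}

/-! ### Auxiliary lemmas -/

section Aux

lemma piC_pos (ω : Cfg d) (x : V d) : 0 < piC ω x := ω.pos x

lemma step_nonneg (ω : Cfg d) (x y : V d) : 0 ≤ step ω x y :=
  div_nonneg (ω.nonneg x y) (piC_pos ω x).le

lemma w_le_piC (ω : Cfg d) (x y : V d) : ω.w x y ≤ piC ω x :=
  Summable.le_tsum (ω.summ x) y (fun z _ => ω.nonneg x z)

lemma step_le_one (ω : Cfg d) (x y : V d) : step ω x y ≤ 1 := by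
  rw [step, div_le_one (piC_pos ω x)]; exact w_le_piC ω x y

lemma step_summable (ω : Cfg d) (x : V d) : Summable (step ω x) :=
  (ω.summ x).div_const _

lemma tsum_step (ω : Cfg d) (x : V d) : ∑' y, step ω x y = 1 := by
  unfold step
  rw [tsum_div_const]; exact div_self (piC_pos ω x).ne'

/-- `ℝ≥0∞`-valued one-step transition probabilities. -/
def stepE (ω : Cfg d) (x y : V d) : ℝ≥0∞ := ENNReal.ofReal (step ω x y)

lemma stepE_le_one (ω : Cfg d) (x y : V d) : stepE ω x y ≤ 1 :=
  ENNReal.ofReal_le_one.2 (step_le_one ω x y)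

lemma tsum_stepE (ω : Cfg d) (x : V d) : ∑' y, stepE ω x y = 1 := by
  unfold stepE
  rw [← ENNReal.ofReal_tsum_of_nonneg (fun y => step_nonneg ω x y) (step_summable ω x),
    tsum_step, ENNReal.ofReal_one]

/-- `ℝ≥0∞`-valued `n`-step transition probabilities. -/
def PnE (ω : Cfg d) : ℕ → V d → V d → ℝ≥0∞
  | 0, x, y => if x = y then 1 else 0
  | n + 1, x, y => ∑' z, PnE ω n x z * stepE ω z y

lemma Pn_key (ω : Cfg d) (n : ℕ) :
    (∀ x y, 0 ≤ Pn ω n x y) ∧ (∀ x y, PnE ω n x y = ENNReal.ofReal (Pn ω n x y)) ∧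
      (∀ x, ∑' y, PnE ω n x y = 1) := by
  induction n with
  | zero =>
    refine ⟨fun x y => ?_, fun x y => ?_, fun x => ?_⟩
    · unfold Pn; split <;> norm_num
    · unfold Pn PnE; split <;> simp
    · show (∑' y, if x = y then (1:ℝ≥0∞) else 0) = 1
      simp only [eq_comm (a := x)]
      exact tsum_ite_eq x 1
  | succ n ih =>
    obtain ⟨h0, h1, h2⟩ := ih
    have hsumm : ∀ x, Summable fun z => Pn ω n x z := by
      intro x
      have hfin : (∑' z, PnE ω n x z) ≠ ⊤ := by rw [h2 x]; exact ENNReal.one_ne_top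
      have := ENNReal.summable_toReal hfin
      simpa only [h1, ENNReal.toReal_ofReal (h0 x _)] using this
    have hg : ∀ x y, Summable fun z => Pn ω n x z * step ω z y := by
      intro x y
      refine Summable.of_nonneg_of_le (fun z => mul_nonneg (h0 x z) (step_nonneg ω z y))
        (fun z => ?_) (hsumm x)
      calc Pn ω n x z * step ω z y ≤ Pn ω n x z * 1 :=
            mul_le_mul_of_nonneg_left (step_le_one ω z y) (h0 x z)
        _ = Pn ω n x z := mul_one _
    have h0' : ∀ x y, 0 ≤ Pn ω (n+1) x y := fun x y =>
      tsum_nonneg fun z => mul_nonneg (h0 x z) (step_nonneg ω z y)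
    have h1' : ∀ x y, PnE ω (n+1) x y = ENNReal.ofReal (Pn ω (n+1) x y) := by
      intro x y
      show (∑' z, PnE ω n x z * stepE ω z y) = _
      have : ∀ z, PnE ω n x z * stepE ω z y = ENNReal.ofReal (Pn ω n x z * step ω z y) := by
        intro z; rw [h1, stepE, ENNReal.ofReal_mul (h0 x z)]
      rw [tsum_congr this,
        ← ENNReal.ofReal_tsum_of_nonneg (fun z => mul_nonneg (h0 x z) (step_nonneg ω z y)) (hg x y)]
      rfl
    refine ⟨h0', h1', fun x => ?_⟩
    show (∑' y, ∑' z, PnE ω n x z * stepE ω z y) = 1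
    rw [ENNReal.tsum_comm]
    calc (∑' z, ∑' y, PnE ω n x z * stepE ω z y)
        = ∑' z, PnE ω n x z * ∑' y, stepE ω z y := by
          refine tsum_congr fun z => ?_; rw [ENNReal.tsum_mul_left]
      _ = ∑' z, PnE ω n x z := by
          refine tsum_congr fun z => ?_; rw [tsum_stepE, mul_one]
      _ = 1 := h2 x

lemma Pn_nonneg (ω : Cfg d) (n : ℕ) (x y : V d) : 0 ≤ Pn ω n x y := (Pn_key ω n).1 x y

lemma PnE_eq (ω : Cfg d) (n : ℕ) (x y : V d) : PnE ω n x y = ENNReal.ofReal (Pn ω n x y) :=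
  (Pn_key ω n).2.1 x y

lemma tsum_PnE (ω : Cfg d) (n : ℕ) (x : V d) : ∑' y, PnE ω n x y = 1 := (Pn_key ω n).2.2 x

lemma PnE_zero (ω : Cfg d) (x y : V d) : PnE ω 0 x y = if x = y then 1 else 0 := rfl

lemma PnE_succ (ω : Cfg d) (n : ℕ) (x y : V d) :
    PnE ω (n+1) x y = ∑' z, PnE ω n x z * stepE ω z y := rfl

lemma PnE_one (ω : Cfg d) (x y : V d) : PnE ω 1 x y = stepE ω x y := by
  rw [PnE_succ]
  calc (∑' z, PnE ω 0 x z * stepE ω z y)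
      = ∑' z, if z = x then stepE ω x y else 0 := by
        refine tsum_congr fun z => ?_
        rw [PnE_zero]
        rcases eq_or_ne x z with h | h
        · subst h; simp
        · simp [h, Ne.symm h]
    _ = stepE ω x y := tsum_ite_eq x _

lemma PnE_add (ω : Cfg d) (m n : ℕ) (x y : V d) :
    PnE ω (m + n) x y = ∑' z, PnE ω m x z * PnE ω n z y := by
  induction n generalizing y with
  | zero =>
    symm
    calc (∑' z, PnE ω m x z * PnE ω 0 z y)
        = ∑' z, if z = y then PnE ω m x y else 0 := by
          refine tsum_congr fun z => ?_
          rw [PnE_zero]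
          rcases eq_or_ne z y with h | h
          · subst h; simp
          · simp [h]
      _ = PnE ω m x y := tsum_ite_eq y _
  | succ n ih =>
    have : m + (n + 1) = (m + n) + 1 := by ring
    rw [this, PnE_succ]
    calc (∑' w, PnE ω (m+n) x w * stepE ω w y)
        = ∑' w, (∑' z, PnE ω m x z * PnE ω n z w) * stepE ω w y := by
          refine tsum_congr fun w => ?_; rw [ih]
      _ = ∑' w, ∑' z, PnE ω m x z * PnE ω n z w * stepE ω w y := by
          refine tsum_congr fun w => ?_; rw [ENNReal.tsum_mul_right]
      _ = ∑' z, ∑' w, PnE ω m x z * (PnE ω n z w * stepE ω w y) := by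
          rw [ENNReal.tsum_comm]
          exact tsum_congr fun z => tsum_congr fun w => mul_assoc _ _ _
      _ = ∑' z, PnE ω m x z * ∑' w, PnE ω n z w * stepE ω w y := by
          refine tsum_congr fun z => ?_; rw [ENNReal.tsum_mul_left]
      _ = ∑' z, PnE ω m x z * PnE ω (n+1) z y := rfl

lemma PnE_succ' (ω : Cfg d) (n : ℕ) (x y : V d) :
    PnE ω (n+1) x y = ∑' z, stepE ω x z * PnE ω n z y := by
  have : n + 1 = 1 + n := by ring
  rw [this, PnE_add]
  exact tsum_congr fun z => by rw [PnE_one]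

/-- `ℝ≥0∞`-valued `π_ω`. -/
def piE (ω : Cfg d) (x : V d) : ℝ≥0∞ := ENNReal.ofReal (piC ω x)

lemma piE_mul_stepE (ω : Cfg d) (x y : V d) :
    piE ω x * stepE ω x y = ENNReal.ofReal (ω.w x y) := by
  rw [piE, stepE, ← ENNReal.ofReal_mul (piC_pos ω x).le, step,
    mul_div_cancel₀ _ (piC_pos ω x).ne']

/-- Reversibility of the `n`-step transition probabilities. -/
lemma PnE_rev (ω : Cfg d) (n : ℕ) (x y : V d) :
    piE ω x * PnE ω n x y = piE ω y * PnE ω n y x := by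
  induction n generalizing x y with
  | zero =>
    rcases eq_or_ne x y with h | h
    · subst h; rfl
    · rw [PnE_zero, PnE_zero, if_neg h, if_neg (Ne.symm h)]; simp
  | succ n ih =>
    rw [PnE_succ, PnE_succ' ω n y x, ← ENNReal.tsum_mul_left, ← ENNReal.tsum_mul_left]
    refine tsum_congr fun z => ?_
    calc piE ω x * (PnE ω n x z * stepE ω z y)
        = (piE ω x * PnE ω n x z) * stepE ω z y := (mul_assoc _ _ _).symm
      _ = (piE ω z * PnE ω n z x) * stepE ω z y := by rw [ih]
      _ = (piE ω z * stepE ω z y) * PnE ω n z x := by ring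
      _ = ENNReal.ofReal (ω.w z y) * PnE ω n z x := by rw [piE_mul_stepE]
      _ = ENNReal.ofReal (ω.w y z) * PnE ω n z x := by rw [ω.symm]
      _ = (piE ω y * stepE ω y z) * PnE ω n z x := by rw [piE_mul_stepE]
      _ = piE ω y * (stepE ω y z * PnE ω n z x) := mul_assoc _ _ _

lemma Pn_rev (ω : Cfg d) (n : ℕ) (x y : V d) :
    piC ω x * Pn ω n x y = piC ω y * Pn ω n y x := by
  have h := PnE_rev ω n x y
  rw [piE, piE, PnE_eq, PnE_eq, ← ENNReal.ofReal_mul (piC_pos ω x).le,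
    ← ENNReal.ofReal_mul (piC_pos ω y).le] at h
  rw [← ENNReal.ofReal_eq_ofReal_iff (mul_nonneg (piC_pos ω x).le (Pn_nonneg ω n x y))
    (mul_nonneg (piC_pos ω y).le (Pn_nonneg ω n y x))]
  exact h

end Aux


section PathLaw

/-- The first `n` values of `q`, then the constant `x`. -/
def pth (n : ℕ) (q : Fin n → V d) (x : V d) : ℕ → V d :=
  fun i => if h : i < n then q ⟨i, h⟩ else x

/-- `ℝ≥0∞`-valued weight of a path of length `n`. -/
def WE (ω : Cfg d) (n : ℕ) (p : ℕ → V d) : ℝ≥0∞ :=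
  (if p 0 = 0 then 1 else 0) * ∏ i ∈ Finset.range n, stepE ω (p i) (p (i+1))

lemma ofReal_weight (ω : Cfg d) (n : ℕ) (p : ℕ → V d) :
    ENNReal.ofReal ((if p 0 = 0 then (1:ℝ) else 0) *
      ∏ i ∈ Finset.range n, step ω (p i) (p (i + 1))) = WE ω n p := by
  rw [ENNReal.ofReal_mul (by split <;> norm_num), WE]
  congr 1
  · split <;> simp
  · exact ENNReal.ofReal_prod_of_nonneg (fun i _ => step_nonneg ω _ _)

lemma cyl_measurable (p : ℕ → V d) (n : ℕ) :
    MeasurableSet {X : ℕ → V d | ∀ i ≤ n, X i = p i} := by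
  have : {X : ℕ → V d | ∀ i ≤ n, X i = p i} =
      ⋂ i, ⋂ (_ : i ≤ n), (fun X : ℕ → V d => X i) ⁻¹' {p i} := by
    ext X; simp [Set.mem_iInter]
  rw [this]
  exact MeasurableSet.iInter fun i => MeasurableSet.iInter fun _ =>
    (measurable_pi_apply i) (measurableSet_singleton _)

lemma tsum_WE (ω : Cfg d) : ∀ (n : ℕ) (x : V d),
    (∑' q : Fin n → V d, WE ω n (pth n q x)) = PnE ω n 0 x := by
  intro n
  induction n with
  | zero =>
    intro x
    have h1 : ∀ q : Fin 0 → V d, WE ω 0 (pth 0 q x) = if (0:V d) = x then 1 else 0 := by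
      intro q
      unfold WE pth
      simp [eq_comm]
    rw [tsum_congr h1,
      tsum_eq_single (default : Fin 0 → V d) (fun b hb => absurd (Subsingleton.elim b default) hb)]
    rfl
  | succ n ih =>
    intro x
    have hsnoc : ∀ (q : Fin n → V d) (z : V d) (i : ℕ) (h : i < n+1),
        (Fin.snoc q z : Fin (n+1) → V d) ⟨i, h⟩ = if h' : i < n then q ⟨i, h'⟩ else z := by
      intro q z i h
      by_cases h' : i < n
      · rw [dif_pos h']
        have he : (⟨i, h⟩ : Fin (n+1)) = Fin.castSucc ⟨i, h'⟩ := rfl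
        rw [he, Fin.snoc_castSucc]
      · rw [dif_neg h']
        have hi : i = n := by omega
        subst hi
        have he : (⟨i, h⟩ : Fin (i+1)) = Fin.last i := rfl
        rw [he, Fin.snoc_last]
    have key : ∀ (q : Fin n → V d) (z : V d),
        WE ω (n+1) (pth (n+1) (Fin.snoc q z) x) = WE ω n (pth n q z) * stepE ω z x := by
      intro q z
      have hc : ∀ i ≤ n, pth (n+1) (Fin.snoc q z) x i = pth n q z i := by
        intro i hi
        unfold pth
        rw [dif_pos (by omega : i < n+1), hsnoc]
      have hn1 : pth (n+1) (Fin.snoc q z) x (n+1) = x := by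
        unfold pth; rw [dif_neg (lt_irrefl _)]
      have hn : pth (n+1) (Fin.snoc q z) x n = z := by
        rw [hc n le_rfl]; unfold pth; rw [dif_neg (lt_irrefl n)]
      unfold WE
      rw [Finset.prod_range_succ, hc 0 (Nat.zero_le n)]
      have hprod : (∏ i ∈ Finset.range n,
          stepE ω (pth (n+1) (Fin.snoc q z) x i) (pth (n+1) (Fin.snoc q z) x (i+1)))
          = ∏ i ∈ Finset.range n, stepE ω (pth n q z i) (pth n q z (i+1)) := by
        refine Finset.prod_congr rfl fun i hi => ?_
        rw [Finset.mem_range] at hi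
        rw [hc i hi.le, hc (i+1) hi]
      rw [hprod, hn, hn1]
      ring
    let e : ((Fin n → V d) × V d) ≃ (Fin (n+1) → V d) :=
      { toFun := fun p => Fin.snoc p.1 p.2
        invFun := fun q => (fun i => q i.castSucc, q (Fin.last n))
        left_inv := by
          rintro ⟨q, z⟩
          simp [Fin.snoc_castSucc, Fin.snoc_last]
        right_inv := fun q => Fin.snoc_init_self q }
    calc (∑' q : Fin (n+1) → V d, WE ω (n+1) (pth (n+1) q x))
        = ∑' p : (Fin n → V d) × V d, WE ω (n+1) (pth (n+1) (Fin.snoc p.1 p.2) x) :=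
          (e.tsum_eq _).symm
      _ = ∑' q : Fin n → V d, ∑' z, WE ω n (pth n q z) * stepE ω z x := by
          rw [ENNReal.tsum_prod']
          exact tsum_congr fun q => tsum_congr fun z => key q z
      _ = ∑' z, ∑' q : Fin n → V d, WE ω n (pth n q z) * stepE ω z x := ENNReal.tsum_comm
      _ = ∑' z, (∑' q : Fin n → V d, WE ω n (pth n q z)) * stepE ω z x := by
          refine tsum_congr fun z => ?_; rw [ENNReal.tsum_mul_right]
      _ = ∑' z, PnE ω n 0 z * stepE ω z x := by
          refine tsum_congr fun z => ?_; rw [ih z]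
      _ = PnE ω (n+1) 0 x := rfl

lemma pathlaw_marginal (ω : Cfg d) (μ : Measure (ℕ → V d)) (h : IsPathLaw ω 0 μ)
    (n : ℕ) (x : V d) : μ {X | X n = x} = PnE ω n 0 x := by
  have hunion : {X : ℕ → V d | X n = x}
      = ⋃ q : Fin n → V d, {X | ∀ i ≤ n, X i = pth n q x i} := by
    ext X
    simp only [Set.mem_iUnion, Set.mem_setOf_eq]
    constructor
    · intro hX
      refine ⟨fun i => X i.1, fun i hi => ?_⟩
      unfold pth
      by_cases h' : i < n
      · rw [dif_pos h']
      · rw [dif_neg h']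
        have : i = n := by omega
        subst this
        exact hX
    · rintro ⟨q, hq⟩
      have h2 := hq n le_rfl
      unfold pth at h2
      rwa [dif_neg (lt_irrefl n)] at h2
  have hdisj : Pairwise (Function.onFun Disjoint
      fun q : Fin n → V d => {X : ℕ → V d | ∀ i ≤ n, X i = pth n q x i}) := by
    intro q q' hne
    refine Set.disjoint_left.2 fun X hX hX' => hne ?_
    funext i
    have h1 := hX i.1 i.2.le
    have h2 := hX' i.1 i.2.le
    unfold pth at h1 h2
    rw [dif_pos i.2] at h1 h2
    rw [Fin.eta] at h1 h2
    rw [← h1, ← h2]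
  rw [hunion, measure_iUnion hdisj (fun q => cyl_measurable _ n)]
  calc (∑' q : Fin n → V d, μ {X | ∀ i ≤ n, X i = pth n q x i})
      = ∑' q : Fin n → V d, WE ω n (pth n q x) := by
        refine tsum_congr fun q => ?_
        rw [h.2 n (pth n q x), ofReal_weight]
      _ = PnE ω n 0 x := tsum_WE ω n x

end PathLaw

set_option maxHeartbeats 2000000 in
/-- (The CLT implies the diagonal heat-kernel lower bound)
Fix a configuration `ω` with `π* := sup_x π_ω(x) < ∞` and suppose the walk satisfies a
CLT with a non-degenerate centered Gaussian limit on `ℝ^d` (with covariance matrix `C`).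
Then there is `c > 0`, depending only on `d`, the limiting covariance and `π*`, such
that `P_ω^{2n}(0,0) ≥ c n^{-d/2} π_ω(0)` for all sufficiently large `n`. -/
theorem statement15 {d : ℕ} (pstar : ℝ)
    (C : Matrix (Fin d) (Fin d) ℝ) (hC : C.PosDef)
    (μG : Measure (Fin d → ℝ)) (hGprob : IsProbabilityMeasure μG)
    -- `μG` is the centered Gaussian vector with covariance matrix `C`:
    (hGproj : ∀ lam : Fin d → ℝ,
      μG.map (fun y => ∑ i, lam i * y i)
        = ProbabilityTheory.gaussianReal 0 (dotProduct lam (C.mulVec lam)).toNNReal) :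
    ∃ c : ℝ, 0 < c ∧
      ∀ (ω : Cfg d) (μpath : Measure (ℕ → V d)),
        IsPathLaw ω 0 μpath →
        (∀ x, piC ω x ≤ pstar) →
        -- the CLT: `X_n/√n` converges in distribution to `μG` under `P_ω^0`:
        (∀ F : BoundedContinuousFunction (Fin d → ℝ) ℝ,
          Tendsto (fun n : ℕ => ∫ X, F ((Real.sqrt n)⁻¹ • toR (X n)) ∂μpath) atTop
            (𝓝 (∫ y, F y ∂μG))) →
        ∀ᶠ n : ℕ in atTop,
          c * (n : ℝ) ^ (-(d : ℝ) / 2) * piC ω 0 ≤ Pn ω (2 * n) 0 0 := by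
  classical
  -- Step 1: choose `K` with `μG(closedBall 0 K) ≥ 3/4`.
  obtain ⟨K, hK⟩ : ∃ K : ℕ, (3/4 : ℝ≥0∞) ≤ μG (Metric.closedBall 0 K) := by
    have hmono : Monotone fun K : ℕ => Metric.closedBall (0 : Fin d → ℝ) K := by
      intro a b hab
      exact Metric.closedBall_subset_closedBall (by exact_mod_cast hab)
    have hU : (⋃ K : ℕ, Metric.closedBall (0 : Fin d → ℝ) K) = univ := by
      ext y
      simp only [Set.mem_iUnion, Metric.mem_closedBall, Set.mem_univ, iff_true]
      obtain ⟨K, hKy⟩ := exists_nat_ge (dist y 0)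
      exact ⟨K, hKy⟩
    have ht := tendsto_measure_iUnion_atTop (μ := μG) hmono
    rw [hU, measure_univ] at ht
    have h34 : (3/4 : ℝ≥0∞) < 1 := by
      rw [ENNReal.div_lt_iff (by norm_num) (by norm_num)]; norm_num
    exact (ht.eventually (eventually_ge_nhds h34)).exists
  -- Step 2: construct the bump function `F`.
  obtain ⟨F, hF0, hF1, hFin, hFout⟩ : ∃ F : BoundedContinuousFunction (Fin d → ℝ) ℝ,
      (∀ y, 0 ≤ F y) ∧ (∀ y, F y ≤ 1) ∧ (∀ y, ‖y‖ ≤ K → F y = 1) ∧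
        (∀ y, (K:ℝ) + 1 < ‖y‖ → F y = 0) := by
    have hcont : Continuous fun y : Fin d → ℝ => max 0 (min 1 ((K+1) - ‖y‖)) := by
      fun_prop
    refine ⟨BoundedContinuousFunction.mkOfBound ⟨_, hcont⟩ 2 ?_, ?_, ?_, ?_, ?_⟩
    · intro a b
      have h1 : ∀ y : Fin d → ℝ, |max 0 (min 1 ((K+1) - ‖y‖))| ≤ 1 := by
        intro y
        rw [abs_le]
        constructor
        · linarith [le_max_left (0:ℝ) (min 1 ((K+1) - ‖y‖))]
        · exact max_le (by norm_num) (min_le_left _ _)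
      calc dist (max 0 (min 1 ((K+1) - ‖a‖))) (max 0 (min 1 ((K+1) - ‖b‖)))
          ≤ |max 0 (min 1 ((K+1) - ‖a‖))| + |max 0 (min 1 ((K+1) - ‖b‖))| := by
            rw [Real.dist_eq]; exact abs_sub _ _
        _ ≤ 2 := by linarith [h1 a, h1 b]
    · intro y; exact le_max_left _ _
    · intro y; exact max_le (by norm_num) (min_le_left _ _)
    · intro y hy
      have : (1:ℝ) ≤ (K+1) - ‖y‖ := by linarith
      show max 0 (min 1 ((K+1) - ‖y‖)) = 1
      rw [min_eq_left this]; norm_num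
    · intro y hy
      show max 0 (min 1 ((K+1) - ‖y‖)) = 0
      rw [max_eq_left]
      exact min_le_of_right_le (by linarith)
  set M : ℝ := max pstar 1 with hM
  have hM1 : (1:ℝ) ≤ M := le_max_right _ _
  have hMpos : (0:ℝ) < M := lt_of_lt_of_le one_pos hM1
  have hKpos : (0:ℝ) < 2*(K:ℝ)+3 := by positivity
  refine ⟨1 / (4 * M * (2*(K:ℝ)+3)^d), by positivity, ?_⟩
  intro ω μpath hPL hpi hCLT
  have hprob : IsProbabilityMeasure μpath := hPL.1
  have hpiM : ∀ x, piC ω x ≤ M := fun x => (hpi x).trans (le_max_left _ _)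
  have hpi0 : (0:ℝ) < piC ω 0 := piC_pos ω 0
  -- Step 3: `∫ F dμG ≥ 3/4`.
  have hIG : (3/4 : ℝ) ≤ ∫ y, F y ∂μG := by
    have hind : Integrable ((Metric.closedBall (0 : Fin d → ℝ) K).indicator
        fun _ => (1:ℝ)) μG := (integrable_const 1).indicator Metric.isClosed_closedBall.measurableSet
    have hle : ∀ y, (Metric.closedBall (0 : Fin d → ℝ) K).indicator (fun _ => (1:ℝ)) y ≤ F y := by
      intro y
      by_cases hy : y ∈ Metric.closedBall (0 : Fin d → ℝ) K
      · rw [Set.indicator_of_mem hy]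
        refine (hFin y ?_).ge
        simpa [dist_zero_right] using hy
      · rw [Set.indicator_of_notMem hy]; exact hF0 y
    have h1 : (μG (Metric.closedBall (0 : Fin d → ℝ) K)).toReal
        ≤ ∫ y, F y ∂μG := by
      calc (μG (Metric.closedBall (0 : Fin d → ℝ) K)).toReal
          = ∫ y, (Metric.closedBall (0 : Fin d → ℝ) K).indicator (fun _ => (1:ℝ)) y ∂μG := by
            rw [integral_indicator_const _ Metric.isClosed_closedBall.measurableSet]; simp [measureReal_def]
        _ ≤ ∫ y, F y ∂μG := integral_mono hind (F.integrable μG) hle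
    refine le_trans ?_ h1
    have := ENNReal.toReal_mono (measure_ne_top μG _) hK
    calc (3/4 : ℝ) = ((3/4 : ℝ≥0∞)).toReal := by
          rw [ENNReal.toReal_div]; norm_num
      _ ≤ _ := this
  have hev1 := (hCLT F).eventually (eventually_ge_nhds
    (show (1/2:ℝ) < ∫ y, F y ∂μG by linarith))
  filter_upwards [hev1, eventually_ge_atTop 1] with n hn hn1
  -- Notation for this `n`.
  have hn0 : (0:ℝ) < n := by exact_mod_cast hn1
  have hsq1 : (1:ℝ) ≤ Real.sqrt n := by
    rw [show (1:ℝ) = Real.sqrt 1 by simp]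
    exact Real.sqrt_le_sqrt (by exact_mod_cast hn1)
  have hsq0 : (0:ℝ) < Real.sqrt n := lt_of_lt_of_le one_pos hsq1
  set R : ℤ := ⌊((K:ℝ)+1) * Real.sqrt n⌋ with hRdef
  have hRnn : 0 ≤ R := Int.floor_nonneg.2 (by positivity)
  set B : Finset (V d) := Fintype.piFinset (fun _ : Fin d => Finset.Icc (-R) R) with hBdef
  -- Step 4: `∫ F((√n)⁻¹ X_n) dμpath ≤ μpath {X n ∈ B}`.
  have hBmeas : MeasurableSet {X : ℕ → V d | X n ∈ B} :=
    (measurable_pi_apply n) B.finite_toSet.measurableSet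
  have hout : ∀ x : V d, x ∉ B → F ((Real.sqrt n)⁻¹ • toR x) = 0 := by
    intro x hx
    refine hFout _ ?_
    -- some coordinate exceeds `R`
    have : ∃ i, x i ∉ Finset.Icc (-R) R := by
      by_contra hcon
      push_neg at hcon
      exact hx (Fintype.mem_piFinset.2 hcon)
    obtain ⟨i, hi⟩ := this
    rw [Finset.mem_Icc] at hi
    have habs : R + 1 ≤ |x i| := by
      rcases abs_cases (x i) with ⟨he, _⟩ | ⟨he, _⟩ <;> omega
    have hlt : ((K:ℝ)+1) * Real.sqrt n < |(x i : ℝ)| := by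
      have h1 : ((K:ℝ)+1) * Real.sqrt n < R + 1 := Int.lt_floor_add_one _
      have h2 : ((R:ℝ) + 1) ≤ |(x i : ℝ)| := by
        rw [← Int.cast_abs]
        exact_mod_cast habs
      linarith
    have hnorm : |(x i : ℝ)| ≤ ‖toR x‖ := by
      have := norm_le_pi_norm (toR x) i
      simpa [toR, Real.norm_eq_abs] using this
    rw [norm_smul, Real.norm_eq_abs, abs_inv, abs_of_pos hsq0]
    rw [lt_inv_mul_iff₀ hsq0]
    calc Real.sqrt n * ((K:ℝ)+1) = ((K:ℝ)+1) * Real.sqrt n := by ring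
      _ < |(x i : ℝ)| := hlt
      _ ≤ ‖toR x‖ := hnorm
  have hgmeas : Measurable fun X : ℕ → V d => F ((Real.sqrt n)⁻¹ • toR (X n)) :=
    F.continuous.measurable.comp
      ((measurable_of_countable fun v : V d => (Real.sqrt n)⁻¹ • toR v).comp
        (measurable_pi_apply n))
  have hgint : Integrable (fun X : ℕ → V d => F ((Real.sqrt n)⁻¹ • toR (X n))) μpath := by
    refine Integrable.mono' (integrable_const 1) hgmeas.aestronglyMeasurable ?_
    refine Filter.Eventually.of_forall fun X => ?_
    rw [Real.norm_eq_abs, abs_le]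
    exact ⟨by linarith [hF0 ((Real.sqrt n)⁻¹ • toR (X n))], hF1 _⟩
  have hstep1 : ∫ X, F ((Real.sqrt n)⁻¹ • toR (X n)) ∂μpath
      ≤ (μpath {X : ℕ → V d | X n ∈ B}).toReal := by
    have hind : Integrable ({X : ℕ → V d | X n ∈ B}.indicator fun _ => (1:ℝ)) μpath :=
      (integrable_const 1).indicator hBmeas
    have hle : ∀ X : ℕ → V d, F ((Real.sqrt n)⁻¹ • toR (X n))
        ≤ {X : ℕ → V d | X n ∈ B}.indicator (fun _ => (1:ℝ)) X := by
      intro X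
      by_cases hX : X ∈ {X : ℕ → V d | X n ∈ B}
      · rw [Set.indicator_of_mem hX]; exact hF1 _
      · rw [Set.indicator_of_notMem hX, hout _ hX]
    calc ∫ X, F ((Real.sqrt n)⁻¹ • toR (X n)) ∂μpath
        ≤ ∫ X, {X : ℕ → V d | X n ∈ B}.indicator (fun _ => (1:ℝ)) X ∂μpath :=
          integral_mono hgint hind hle
      _ = (μpath {X : ℕ → V d | X n ∈ B}).toReal := by
          rw [integral_indicator_const _ hBmeas]; simp [measureReal_def]
  -- Step 5: mass of `B` under the walk.
  set Sr : ℝ := ∑ x ∈ B, Pn ω n 0 x with hSrdef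
  have hSrnn : 0 ≤ Sr := Finset.sum_nonneg fun x _ => Pn_nonneg ω n 0 x
  have hmassB : μpath {X : ℕ → V d | X n ∈ B} = ENNReal.ofReal Sr := by
    have hun : {X : ℕ → V d | X n ∈ B} = ⋃ x ∈ B, {X : ℕ → V d | X n = x} := by
      ext X; simp
    have hdisj : (B : Set (V d)).PairwiseDisjoint
        fun x : V d => {X : ℕ → V d | X n = x} := by
      intro x _ y _ hxy
      refine Set.disjoint_left.2 fun X hX hX' => hxy ?_
      rw [← hX, ← hX']
    have hsing : ∀ x : V d, MeasurableSet {X : ℕ → V d | X n = x} := by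
      intro x
      have he : {X : ℕ → V d | X n = x} = (fun X : ℕ → V d => X n) ⁻¹' {x} := rfl
      rw [he]
      exact (measurable_pi_apply n) (measurableSet_singleton x)
    rw [hun, measure_biUnion_finset hdisj (fun x _ => hsing x)]
    rw [hSrdef, ENNReal.ofReal_sum_of_nonneg (fun x _ => Pn_nonneg ω n 0 x)]
    exact Finset.sum_congr rfl fun x _ => by
      rw [pathlaw_marginal ω μpath hPL n x, PnE_eq]
  have hSr : (1/2 : ℝ) ≤ Sr := by
    have := hn.trans hstep1
    rwa [hmassB, ENNReal.toReal_ofReal hSrnn] at this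
  -- Step 6: Cauchy–Schwarz.
  have hcardpos : (0:ℝ) < B.card := by
    by_contra hcon
    push_neg at hcon
    have : B.card = 0 := by exact_mod_cast le_antisymm hcon (by positivity)
    rw [Finset.card_eq_zero] at this
    rw [hSrdef, this, Finset.sum_empty] at hSr
    linarith
  have hCS : (1/4 : ℝ) / B.card ≤ ∑ x ∈ B, (Pn ω n 0 x)^2 := by
    have h1 : Sr^2 ≤ B.card * ∑ x ∈ B, (Pn ω n 0 x)^2 := sq_sum_le_card_mul_sum_sq
    have h2 : (1/4 : ℝ) ≤ Sr^2 := by nlinarith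
    rw [div_le_iff₀ hcardpos]
    nlinarith [Finset.sum_nonneg (fun x (_ : x ∈ B) => sq_nonneg (Pn ω n 0 x))]
  -- Step 7: heat kernel lower bound via reversibility.
  have hlow : (piC ω 0 / M) * ∑ x ∈ B, (Pn ω n 0 x)^2 ≤ Pn ω (2*n) 0 0 := by
    have hterm : ∀ x ∈ B, (piC ω 0 / M) * (Pn ω n 0 x)^2 ≤ Pn ω n 0 x * Pn ω n x 0 := by
      intro x _
      have hpx : (0:ℝ) < piC ω x := piC_pos ω x
      have hrev : Pn ω n x 0 = piC ω 0 * Pn ω n 0 x / piC ω x := by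
        rw [eq_div_iff hpx.ne']
        rw [mul_comm (Pn ω n x 0) (piC ω x)]
        exact (Pn_rev ω n x 0).trans (by ring)
      have key : piC ω 0 * (Pn ω n 0 x)^2 / M ≤ piC ω 0 * (Pn ω n 0 x)^2 / piC ω x :=
        div_le_div_of_nonneg_left (by positivity) hpx (hpiM x)
      calc (piC ω 0 / M) * (Pn ω n 0 x)^2 = piC ω 0 * (Pn ω n 0 x)^2 / M := by ring
        _ ≤ piC ω 0 * (Pn ω n 0 x)^2 / piC ω x := key
        _ = Pn ω n 0 x * (piC ω 0 * Pn ω n 0 x / piC ω x) := by ring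
        _ = Pn ω n 0 x * Pn ω n x 0 := by rw [← hrev]
    have hsum1 : (piC ω 0 / M) * ∑ x ∈ B, (Pn ω n 0 x)^2
        ≤ ∑ x ∈ B, Pn ω n 0 x * Pn ω n x 0 := by
      rw [Finset.mul_sum]
      exact Finset.sum_le_sum hterm
    refine hsum1.trans ?_
    -- `∑_{x∈B} Pⁿ(0,x)Pⁿ(x,0) ≤ P²ⁿ(0,0)` via Chapman–Kolmogorov
    have hE : (∑ x ∈ B, ENNReal.ofReal (Pn ω n 0 x * Pn ω n x 0)) ≤
        ENNReal.ofReal (Pn ω (2*n) 0 0) := by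
      have h1 : ∀ x ∈ B, ENNReal.ofReal (Pn ω n 0 x * Pn ω n x 0)
          = PnE ω n 0 x * PnE ω n x 0 := by
        intro x _
        rw [PnE_eq, PnE_eq, ENNReal.ofReal_mul (Pn_nonneg ω n 0 x)]
      rw [Finset.sum_congr rfl h1, ← PnE_eq]
      have h2 : (2*n) = n + n := by ring
      rw [h2, PnE_add]
      exact ENNReal.sum_le_tsum B
    rw [← ENNReal.ofReal_sum_of_nonneg
      (fun x _ => mul_nonneg (Pn_nonneg ω n 0 x) (Pn_nonneg ω n x 0))] at hE
    exact (ENNReal.ofReal_le_ofReal_iff (Pn_nonneg ω (2*n) 0 0)).1 hE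
  -- Step 8: cardinality bound.
  have hcard : (B.card : ℝ) ≤ (2*(K:ℝ)+3)^d * Real.sqrt n ^ d := by
    have h1 : B.card = (2*R+1).toNat ^ d := by
      rw [hBdef, Fintype.card_piFinset]
      simp [Int.card_Icc]
      ring_nf
    have h2 : ((2*R+1).toNat : ℝ) = ((2*R+1 : ℤ) : ℝ) := by
      rw [← Int.cast_natCast, Int.toNat_of_nonneg (by linarith)]
    have h3 : ((2*R+1 : ℤ) : ℝ) ≤ (2*(K:ℝ)+3) * Real.sqrt n := by
      push_cast
      have hfl : (R:ℝ) ≤ ((K:ℝ)+1) * Real.sqrt n := Int.floor_le _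
      nlinarith
    calc (B.card : ℝ) = ((2*R+1).toNat : ℝ)^d := by rw [h1]; push_cast; ring
      _ ≤ ((2*(K:ℝ)+3) * Real.sqrt n)^d := by
          refine pow_le_pow_left₀ (by positivity) ?_ d
          rw [h2]; exact h3
      _ = (2*(K:ℝ)+3)^d * Real.sqrt n ^ d := mul_pow _ _ _
  -- Step 9: conclude.
  have hrpow : ((n:ℝ) ^ (-(d : ℝ) / 2)) = (Real.sqrt n ^ d)⁻¹ := by
    rw [neg_div, Real.rpow_neg (Nat.cast_nonneg n)]
    congr 1
    rw [show ((d:ℝ)/2) = (1/2) * d by ring, Real.rpow_mul (Nat.cast_nonneg n),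
      Real.rpow_natCast, Real.sqrt_eq_rpow]
  rw [hrpow]
  have hfinal : (piC ω 0 / M) * ((1/4 : ℝ) / B.card) ≤ Pn ω (2*n) 0 0 := by
    refine le_trans ?_ hlow
    exact mul_le_mul_of_nonneg_left hCS (by positivity)
  refine le_trans ?_ hfinal
  have hb1 : (1/4 : ℝ) / ((2*(K:ℝ)+3)^d * Real.sqrt n ^ d) ≤ (1/4 : ℝ) / B.card := by
    refine div_le_div_of_nonneg_left (by norm_num) hcardpos hcard
  calc 1 / (4 * M * (2*(K:ℝ)+3)^d) * (Real.sqrt n ^ d)⁻¹ * piC ω 0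
      = (piC ω 0 / M) * ((1/4 : ℝ) / ((2*(K:ℝ)+3)^d * Real.sqrt n ^ d)) := by
        have hMne : M ≠ 0 := hMpos.ne'
        have hKd : ((2*(K:ℝ)+3)^d) ≠ 0 := (pow_pos hKpos d).ne'
        have hsd : (Real.sqrt n ^ d) ≠ 0 := (pow_pos hsq0 d).ne'
        field_simp
    _ ≤ (piC ω 0 / M) * ((1/4 : ℝ) / B.card) :=
        mul_le_mul_of_nonneg_left hb1 (by positivity)

end RCM
end
end
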